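/- arXiv:2001.03047 — 4 statements merged into one kernel-verified Lean document; each statement's English description precedes it below -/
import Mathlib

section
/- Let p ≥ 1, N ∈ ℕ, and let μ₁ and μ₂ be permutation invariant Borel probability measures on ℝ^N with finite p-th moments. Let I ⊆ {1,…,N} be nonempty with |I| < N, and let f : ℝ^{|I|} → ℝ be a bounded function that is 1-Lipschitz with respect to the ℓ^p-norm on ℝ^{|I|}. Then |∫ f∘P_I dμ₁ − ∫ f∘P_I dμ₂| ≤ (|I| / (1 − |I|/N))^{1/p} · w_p(μ₁, μ₂; N). -/
open MeasureTheory

/-- A probability measure on `ℝ^N` is permutation invariant if it is preserved by every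
coordinate permutation. -/
def PermInvariant {N : ℕ} (μ : Measure (Fin N → ℝ)) : Prop :=
  ∀ π : Equiv.Perm (Fin N), μ.map (fun x => x ∘ π) = μ

/-- The specific `p`-norm fluctuation distance `w_p(μ₁, μ₂; N)`:
the infimum over all couplings `γ` of `μ₁` and `μ₂` of
`∫ (1/N) ∑ᵢ |xᵢ - yᵢ|^p dγ`, raised to the power `1/p`. -/
noncomputable def fluctDist (p : ℝ) (N : ℕ) (μ₁ μ₂ : Measure (Fin N → ℝ)) : ℝ :=
  sInf {c : ℝ | ∃ γ : Measure ((Fin N → ℝ) × (Fin N → ℝ)), IsProbabilityMeasure γ ∧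
      γ.map Prod.fst = μ₁ ∧ γ.map Prod.snd = μ₂ ∧
      c = ∫ xy, (N : ℝ)⁻¹ * ∑ i, |xy.1 i - xy.2 i| ^ p ∂γ} ^ (1 / p)

/-- The projection `P_I : ℝ^N → ℝ^n` sending `x` to the coordinates `(x_i)_{i ∈ I}` listed in
increasing order of the original index. -/
noncomputable def projI {N n : ℕ} (I : Finset (Fin N)) (h : I.card = n)
    (x : Fin N → ℝ) (j : Fin n) : ℝ :=
  x ↑(I.orderIsoOfFin h j)

lemma my_jensen_rpow {α : Type*} [MeasurableSpace α] {μ : Measure α} [IsProbabilityMeasure μ]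
    {p : ℝ} (hp : 1 ≤ p) {g : α → ℝ} (hg0 : ∀ x, 0 ≤ g x) (hgi : Integrable g μ)
    (hgri : Integrable (fun x => g x ^ (1/p)) μ) :
    ∫ x, g x ^ (1/p) ∂μ ≤ (∫ x, g x ∂μ) ^ (1/p) := by
  have hp0 : 0 < p := lt_of_lt_of_le one_pos hp
  have hw1 : (0:ℝ) ≤ 1/p := by positivity
  have hw2 : (0:ℝ) ≤ 1 - 1/p := by
    have : 1/p ≤ 1 := by rw [div_le_one hp0]; exact hp
    linarith
  set m : ℝ := ∫ x, g x ∂μ with hm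
  have hm0 : 0 ≤ m := integral_nonneg hg0
  rcases hm0.eq_or_lt with h0 | h0
  · have hgz : g =ᵐ[μ] 0 := (integral_eq_zero_iff_of_nonneg hg0 hgi).mp h0.symm
    have : (fun x => g x ^ (1/p)) =ᵐ[μ] 0 := by
      filter_upwards [hgz] with x hx
      simp only [Pi.zero_apply] at hx ⊢
      rw [hx, Real.zero_rpow (by positivity : (1:ℝ)/p ≠ 0)]
    rw [integral_congr_ae this]
    simp only [Pi.zero_apply, integral_zero]
    positivity
  · have key : ∀ x, g x ^ (1/p) * m ^ (1 - 1/p) ≤ (1/p) * g x + (1 - 1/p) * m := fun x =>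
      Real.geom_mean_le_arith_mean2_weighted hw1 hw2 (hg0 x) hm0 (by ring)
    have hint1 : Integrable (fun x => g x ^ (1/p) * m ^ (1 - 1/p)) μ := hgri.mul_const _
    have hint2 : Integrable (fun x => (1/p) * g x + (1 - 1/p) * m) μ :=
      (hgi.const_mul _).add (integrable_const _)
    have := integral_mono hint1 hint2 key
    rw [integral_mul_const, integral_add (hgi.const_mul _) (integrable_const _),
      integral_const_mul, integral_const] at this
    simp only [probReal_univ, measure_univ, ENNReal.toReal_one, smul_eq_mul, one_mul] at this
    have hB : (0:ℝ) < m ^ (1 - 1/p) := Real.rpow_pos_of_pos h0 _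
    have hfin : m ^ (1/p) * m ^ (1 - 1/p) = m := by
      rw [← Real.rpow_add h0]; simp
    refine le_of_mul_le_mul_right ?_ hB
    rw [hfin]
    refine le_trans this (le_of_eq ?_)
    rw [← hm]; ring

theorem stmt0 (p : ℝ) (hp : 1 ≤ p) (N : ℕ)
    (μ₁ μ₂ : Measure (Fin N → ℝ)) [IsProbabilityMeasure μ₁] [IsProbabilityMeasure μ₂]
    (hperm₁ : PermInvariant μ₁) (hperm₂ : PermInvariant μ₂)
    (hmom₁ : ∀ i, Integrable (fun x : Fin N → ℝ => |x i| ^ p) μ₁)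
    (hmom₂ : ∀ i, Integrable (fun x : Fin N → ℝ => |x i| ^ p) μ₂)
    (I : Finset (Fin N)) (hI : I.Nonempty) (hIN : I.card < N)
    (f : (Fin I.card → ℝ) → ℝ)
    (hfB : ∃ C, ∀ a, |f a| ≤ C)
    (hfL : ∀ a b, |f a - f b| ≤ (∑ j, |a j - b j| ^ p) ^ (1 / p)) :
    |(∫ x, f (projI I rfl x) ∂μ₁) - ∫ x, f (projI I rfl x) ∂μ₂| ≤
      ((I.card : ℝ) / (1 - (I.card : ℝ) / N)) ^ (1 / p) * fluctDist p N μ₁ μ₂ := by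
  classical
  obtain ⟨C, hC⟩ := hfB
  have hp0 : 0 < p := lt_of_lt_of_le one_pos hp
  have hn1 : 1 ≤ I.card := hI.card_pos
  have hN0 : 0 < N := lt_of_le_of_lt (Nat.zero_le _) hIN
  haveI : NeZero N := ⟨hN0.ne'⟩
  have hNR : (0:ℝ) < N := by exact_mod_cast hN0
  set σ : Fin I.card → Fin N := fun j => ((I.orderIsoOfFin rfl j : Fin N)) with hσ
  have hPmeas : Measurable (fun x : Fin N → ℝ => projI I rfl x) :=
    measurable_pi_lambda _ (fun j => measurable_pi_apply _)
  -- continuity (hence measurability) of f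
  have hfc : Continuous f := by
    have hlip : LipschitzWith ((I.card : NNReal) ^ ((1:ℝ)/p)) f := by
      apply LipschitzWith.of_dist_le_mul
      intro a b
      rw [Real.dist_eq]
      have h1 : |f a - f b| ≤ (∑ j, |a j - b j| ^ p) ^ (1/p) := hfL a b
      have h2 : (∑ j, |a j - b j| ^ p) ^ (1/p) ≤ ((I.card : ℝ) * dist a b ^ p) ^ (1/p) := by
        apply Real.rpow_le_rpow
          (Finset.sum_nonneg fun j _ => Real.rpow_nonneg (abs_nonneg _) p) ?_ (by positivity)
        calc ∑ j, |a j - b j| ^ p ≤ ∑ _j : Fin I.card, dist a b ^ p := by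
              apply Finset.sum_le_sum
              intro j _
              refine Real.rpow_le_rpow (abs_nonneg _) ?_ hp0.le
              rw [← Real.dist_eq]
              exact dist_le_pi_dist a b j
          _ = (I.card : ℝ) * dist a b ^ p := by
              simp [Finset.sum_const, nsmul_eq_mul]
      have h3 : ((I.card : ℝ) * dist a b ^ p) ^ (1/p) = (I.card : ℝ) ^ ((1:ℝ)/p) * dist a b := by
        rw [Real.mul_rpow (by positivity) (by positivity), ← Real.rpow_mul dist_nonneg,
          mul_one_div_cancel hp0.ne', Real.rpow_one]
      calc |f a - f b| ≤ ((I.card : ℝ) * dist a b ^ p) ^ (1/p) := h1.trans h2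
        _ = ↑((I.card : NNReal) ^ ((1:ℝ)/p)) * dist a b := by
            rw [h3]; push_cast [NNReal.coe_rpow]; ring
    exact hlip.continuous
  have hfm : Measurable f := hfc.measurable
  have hfPm : Measurable (fun x : Fin N → ℝ => f (projI I rfl x)) := hfm.comp hPmeas
  set D : ℝ := (∫ x, f (projI I rfl x) ∂μ₁) - ∫ x, f (projI I rfl x) ∂μ₂ with hD
  -- The key estimate per coupling
  have key : ∀ γ : Measure ((Fin N → ℝ) × (Fin N → ℝ)), IsProbabilityMeasure γ →
      γ.map Prod.fst = μ₁ → γ.map Prod.snd = μ₂ →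
      |D| ^ p ≤ (I.card : ℝ) * ∫ xy, (N : ℝ)⁻¹ * ∑ i, |xy.1 i - xy.2 i| ^ p ∂γ := by
    intro γ hγp hγ1 hγ2
    haveI := hγp
    set G : Fin N → ((Fin N → ℝ) × (Fin N → ℝ)) → ℝ := fun k xy => |xy.1 k - xy.2 k| ^ p with hG
    have hGmeas : ∀ k, Measurable (G k) := fun k =>
      (Real.continuous_rpow_const hp0.le).measurable.comp
        (((measurable_pi_apply k).comp measurable_fst).sub
          ((measurable_pi_apply k).comp measurable_snd)).abs
    have hGnn : ∀ k xy, 0 ≤ G k xy := fun k xy => Real.rpow_nonneg (abs_nonneg _) p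
    have hmomγ1 : ∀ k, Integrable (fun xy : (Fin N → ℝ) × (Fin N → ℝ) => |xy.1 k| ^ p) γ := by
      intro k
      have h := hmom₁ k
      rw [← hγ1] at h
      have := (integrable_map_measure
        (((Real.continuous_rpow_const hp0.le).measurable.comp
          (measurable_pi_apply k).abs).aestronglyMeasurable)
        measurable_fst.aemeasurable).mp h
      simpa [Function.comp_def] using this
    have hmomγ2 : ∀ k, Integrable (fun xy : (Fin N → ℝ) × (Fin N → ℝ) => |xy.2 k| ^ p) γ := by
      intro k
      have h := hmom₂ k
      rw [← hγ2] at h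
      have := (integrable_map_measure
        (((Real.continuous_rpow_const hp0.le).measurable.comp
          (measurable_pi_apply k).abs).aestronglyMeasurable)
        measurable_snd.aemeasurable).mp h
      simpa [Function.comp_def] using this
    have hGint : ∀ k, Integrable (G k) γ := by
      intro k
      refine (((hmomγ1 k).add (hmomγ2 k)).const_mul ((2:ℝ) ^ p)).mono'
        ((hGmeas k).aestronglyMeasurable) (ae_of_all _ fun xy => ?_)
      rw [Real.norm_eq_abs, abs_of_nonneg (hGnn k xy)]
      have habs : |xy.1 k - xy.2 k| ≤ |xy.1 k| + |xy.2 k| := abs_sub _ _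
      have hmax : |xy.1 k| + |xy.2 k| ≤ 2 * max |xy.1 k| |xy.2 k| := by
        have := le_max_left |xy.1 k| |xy.2 k|
        have := le_max_right |xy.1 k| |xy.2 k|
        linarith
      calc |xy.1 k - xy.2 k| ^ p ≤ (2 * max |xy.1 k| |xy.2 k|) ^ p :=
            Real.rpow_le_rpow (abs_nonneg _) (habs.trans hmax) hp0.le
        _ = 2 ^ p * max |xy.1 k| |xy.2 k| ^ p := by
            rw [Real.mul_rpow (by norm_num) (le_max_iff.mpr (Or.inl (abs_nonneg _)))]
        _ ≤ 2 ^ p * (|xy.1 k| ^ p + |xy.2 k| ^ p) := by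
            have : max |xy.1 k| |xy.2 k| ^ p ≤ |xy.1 k| ^ p + |xy.2 k| ^ p := by
              rcases max_cases |xy.1 k| |xy.2 k| with ⟨h, _⟩ | ⟨h, _⟩ <;> rw [h]
              · exact le_add_of_nonneg_right (Real.rpow_nonneg (abs_nonneg _) p)
              · exact le_add_of_nonneg_left (Real.rpow_nonneg (abs_nonneg _) p)
            have h2p : (0:ℝ) ≤ 2 ^ p := Real.rpow_nonneg (by norm_num) p
            nlinarith
    set F : Fin N → ℝ := fun k => ∫ xy, G k xy ∂γ with hF
    have hFnn : ∀ k, 0 ≤ F k := fun k => integral_nonneg (hGnn k)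
    have hcost : ∫ xy, (N : ℝ)⁻¹ * ∑ i, |xy.1 i - xy.2 i| ^ p ∂γ = (N:ℝ)⁻¹ * ∑ k, F k := by
      rw [integral_const_mul]
      congr 1
      rw [integral_finset_sum _ (fun k _ => hGint k)]
    -- per-shift estimate
    have hshift : ∀ t : Fin N, |D| ^ p ≤ ∑ j : Fin I.card, F (σ j + t) := by
      intro t
      set τ : Equiv.Perm (Fin N) := Equiv.addRight t with hτ
      have hτm : Measurable (fun x : Fin N → ℝ => x ∘ τ) :=
        measurable_pi_lambda _ fun i => measurable_pi_apply _
      have hfPτm : Measurable (fun x : Fin N → ℝ => f (projI I rfl (x ∘ τ))) :=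
        hfPm.comp hτm
      have e1 : ∫ x, f (projI I rfl x) ∂μ₁ = ∫ xy, f (projI I rfl (xy.1 ∘ τ)) ∂γ := by
        conv_lhs => rw [← hperm₁ τ]
        rw [integral_map hτm.aemeasurable hfPm.aestronglyMeasurable, ← hγ1,
          integral_map measurable_fst.aemeasurable hfPτm.aestronglyMeasurable]
      have e2 : ∫ x, f (projI I rfl x) ∂μ₂ = ∫ xy, f (projI I rfl (xy.2 ∘ τ)) ∂γ := by
        conv_lhs => rw [← hperm₂ τ]
        rw [integral_map hτm.aemeasurable hfPm.aestronglyMeasurable, ← hγ2,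
          integral_map measurable_snd.aemeasurable hfPτm.aestronglyMeasurable]
      have hint1 : Integrable (fun xy : (Fin N → ℝ) × (Fin N → ℝ) =>
          f (projI I rfl (xy.1 ∘ τ))) γ := by
        refine (integrable_const C).mono'
          ((hfPτm.comp measurable_fst).aestronglyMeasurable)
          (ae_of_all _ fun xy => ?_)
        rw [Real.norm_eq_abs]; exact hC _
      have hint2 : Integrable (fun xy : (Fin N → ℝ) × (Fin N → ℝ) =>
          f (projI I rfl (xy.2 ∘ τ))) γ := by
        refine (integrable_const C).mono'
          ((hfPτm.comp measurable_snd).aestronglyMeasurable)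
          (ae_of_all _ fun xy => ?_)
        rw [Real.norm_eq_abs]; exact hC _
      have e3 : D = ∫ xy, (f (projI I rfl (xy.1 ∘ τ)) - f (projI I rfl (xy.2 ∘ τ))) ∂γ := by
        rw [hD, e1, e2, integral_sub hint1 hint2]
      set g : ((Fin N → ℝ) × (Fin N → ℝ)) → ℝ := fun xy => ∑ j : Fin I.card, G (σ j + t) xy
        with hg
      have hgeq : ∀ xy : (Fin N → ℝ) × (Fin N → ℝ),
          (∑ j, |projI I rfl (xy.1 ∘ τ) j - projI I rfl (xy.2 ∘ τ) j| ^ p) = g xy := by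
        intro xy
        apply Finset.sum_congr rfl
        intro j _
        simp [hg, hG, projI, hσ, hτ, Equiv.coe_addRight, Function.comp]
      have hgnn : ∀ xy, 0 ≤ g xy := fun xy => Finset.sum_nonneg fun j _ => hGnn _ xy
      have hgmeas : Measurable g := Finset.measurable_sum _ fun j _ => hGmeas _
      have hgint : Integrable g γ := integrable_finset_sum _ fun j _ => hGint _
      have hgrint : Integrable (fun xy => g xy ^ (1/p)) γ := by
        refine ((integrable_const (1:ℝ)).add hgint).mono'
          ((Real.continuous_rpow_const (by positivity)).measurable.comp
            hgmeas).aestronglyMeasurable (ae_of_all _ fun xy => ?_)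
        simp only [Pi.add_apply]
        rw [Real.norm_eq_abs, abs_of_nonneg (Real.rpow_nonneg (hgnn xy) _)]
        rcases le_or_gt (g xy) 1 with h | h
        · have : g xy ^ (1/p) ≤ 1 := Real.rpow_le_one (hgnn xy) h (by positivity)
          linarith [hgnn xy]
        · have : g xy ^ (1/p) ≤ g xy ^ (1:ℝ) := by
            apply Real.rpow_le_rpow_of_exponent_le h.le
            rw [div_le_one hp0]; exact hp
          rw [Real.rpow_one] at this
          linarith
      have hpt : ∀ xy : (Fin N → ℝ) × (Fin N → ℝ),
          |f (projI I rfl (xy.1 ∘ τ)) - f (projI I rfl (xy.2 ∘ τ))| ≤ g xy ^ (1/p) := by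
        intro xy
        refine (hfL _ _).trans (le_of_eq ?_)
        rw [hgeq xy]
      have hDle : |D| ≤ (∑ j : Fin I.card, F (σ j + t)) ^ (1/p) := by
        calc |D| = |∫ xy, (f (projI I rfl (xy.1 ∘ τ)) - f (projI I rfl (xy.2 ∘ τ))) ∂γ| := by
              rw [e3]
          _ ≤ ∫ xy, |f (projI I rfl (xy.1 ∘ τ)) - f (projI I rfl (xy.2 ∘ τ))| ∂γ := by
              simpa [Real.norm_eq_abs] using
                norm_integral_le_integral_norm
                  (fun xy : (Fin N → ℝ) × (Fin N → ℝ) =>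
                    f (projI I rfl (xy.1 ∘ τ)) - f (projI I rfl (xy.2 ∘ τ)))
          _ ≤ ∫ xy, g xy ^ (1/p) ∂γ :=
              integral_mono (hint1.sub hint2).abs hgrint hpt
          _ ≤ (∫ xy, g xy ∂γ) ^ (1/p) := my_jensen_rpow hp hgnn hgint hgrint
          _ = (∑ j : Fin I.card, F (σ j + t)) ^ (1/p) := by
              rw [hg, integral_finset_sum _ fun j _ => hGint _]
      have hS0 : 0 ≤ ∑ j : Fin I.card, F (σ j + t) :=
        Finset.sum_nonneg fun j _ => hFnn _
      calc |D| ^ p ≤ ((∑ j : Fin I.card, F (σ j + t)) ^ (1/p)) ^ p :=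
            Real.rpow_le_rpow (abs_nonneg _) hDle hp0.le
        _ = ∑ j : Fin I.card, F (σ j + t) := by
            rw [← Real.rpow_mul hS0, one_div_mul_cancel hp0.ne', Real.rpow_one]
    -- sum over shifts
    have hsum : (N : ℝ) * (|D| ^ p) ≤ (I.card : ℝ) * ∑ k, F k := by
      have h1 : ∑ _t : Fin N, |D| ^ p ≤ ∑ t : Fin N, ∑ j : Fin I.card, F (σ j + t) :=
        Finset.sum_le_sum fun t _ => hshift t
      have h2 : ∑ _t : Fin N, |D| ^ p = (N : ℝ) * (|D| ^ p) := by
        simp [Finset.sum_const, nsmul_eq_mul]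
      have h3 : ∑ t : Fin N, ∑ j : Fin I.card, F (σ j + t)
          = (I.card : ℝ) * ∑ k, F k := by
        rw [Finset.sum_comm]
        have : ∀ j : Fin I.card, ∑ t : Fin N, F (σ j + t) = ∑ k, F k := by
          intro j
          have := Equiv.sum_comp (Equiv.addLeft (σ j)) F
          simpa [Equiv.coe_addLeft] using this
        simp only [this, Finset.sum_const, Finset.card_univ, Fintype.card_fin, nsmul_eq_mul]
      rw [← h2, ← h3]; exact h1
    rw [hcost]
    have : (I.card : ℝ) * ((N:ℝ)⁻¹ * ∑ k, F k) = (N:ℝ)⁻¹ * ((I.card : ℝ) * ∑ k, F k) := by ring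
    rw [this]
    rw [show |D| ^ p = (N:ℝ)⁻¹ * ((N:ℝ) * (|D| ^ p)) by field_simp]
    exact mul_le_mul_of_nonneg_left hsum (by positivity)
  -- Assemble
  unfold fluctDist
  set S : Set ℝ := {c : ℝ | ∃ γ : Measure ((Fin N → ℝ) × (Fin N → ℝ)), IsProbabilityMeasure γ ∧
      γ.map Prod.fst = μ₁ ∧ γ.map Prod.snd = μ₂ ∧
      c = ∫ xy, (N : ℝ)⁻¹ * ∑ i, |xy.1 i - xy.2 i| ^ p ∂γ} with hSdef
  have hSne : S.Nonempty := by
    refine ⟨_, μ₁.prod μ₂, inferInstance, ?_, ?_, rfl⟩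
    · rw [Measure.map_fst_prod]; simp
    · rw [Measure.map_snd_prod]; simp
  have hS0 : ∀ c ∈ S, 0 ≤ c := by
    rintro c ⟨γ, hγp, _, _, rfl⟩
    refine integral_nonneg fun xy => ?_
    have : 0 ≤ ∑ i, |xy.1 i - xy.2 i| ^ p :=
      Finset.sum_nonneg fun i _ => Real.rpow_nonneg (abs_nonneg _) p
    positivity
  set K : ℝ := (I.card : ℝ) / (1 - (I.card : ℝ) / N) with hK
  have hnN : (I.card : ℝ) < N := by exact_mod_cast hIN
  have hd : (0:ℝ) < 1 - (I.card : ℝ)/N := by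
    rw [sub_pos, div_lt_one hNR]; exact hnN
  have hnK : (I.card : ℝ) ≤ K := by
    rw [hK, le_div_iff₀ hd]
    have h1 : (0:ℝ) ≤ (I.card : ℝ) / N := by positivity
    nlinarith
  have hn0 : (0:ℝ) < I.card := by exact_mod_cast hn1
  have hKpos : 0 < K := lt_of_lt_of_le hn0 hnK
  have hle : |D| ^ p / K ≤ sInf S := by
    refine le_csInf hSne ?_
    rintro c ⟨γ, hγp, h1, h2, rfl⟩
    rw [div_le_iff₀ hKpos]
    calc |D| ^ p ≤ (I.card : ℝ) * _ := key γ hγp h1 h2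
      _ ≤ K * _ := mul_le_mul_of_nonneg_right hnK (hS0 _ ⟨γ, hγp, h1, h2, rfl⟩)
      _ = _ * K := mul_comm _ _
  have h2 : |D| ^ p ≤ K * sInf S := by
    have := (div_le_iff₀ hKpos).mp hle
    linarith [this]
  have hInf0 : 0 ≤ sInf S := Real.sInf_nonneg hS0
  calc |D| = (|D| ^ p) ^ (1/p) := by
        rw [← Real.rpow_mul (abs_nonneg _), mul_one_div_cancel hp0.ne', Real.rpow_one]
    _ ≤ (K * sInf S) ^ (1/p) := Real.rpow_le_rpow (by positivity) h2 (by positivity)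
    _ = K ^ (1/p) * sInf S ^ (1/p) := Real.mul_rpow hKpos.le hInf0
end

section
/- Let p > 1, N ∈ ℕ, and let μ₁ and μ₂ be permutation invariant Borel probability measures on ℝ^N with finite p₀-th moments for some p₀ ≥ p. Let J be a finite sequence of elements of {1,…,N} (repetitions allowed) of length n_J, let I ⊆ {1,…,N} be the set of elements occurring in J, and assume I ≠ ∅, |I| < N and n_J ≤ p₀ + 1 − p₀/p. For x ∈ ℝ^N write x^J := Π_{ℓ=1}^{n_J} x_{J_ℓ}. Set q := p/(p−1), and let M(J,p) := 1 if n_J = 1, and otherwise M(J,p) := max over i ∈ I and over the two measures μ₁, μ₂ of (∫ |x_i|^{q(n_J−1)} dμ)^{1/(q(n_J−1))}, which is finite. Then |∫ x^J dμ₁ − ∫ x^J dμ₂| ≤ n_J · M(J,p)^{n_J−1} · (|I| / (1 − |I|/N))^{1/p} · w_p(μ₁, μ₂; N). -/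
open MeasureTheory
open scoped ENNReal NNReal

open Finset in
private lemma telesc : ∀ (n : ℕ) (a b : Fin n → ℝ),
    |(∏ ℓ, a ℓ) - ∏ ℓ, b ℓ| ≤
      ∑ ℓ, |a ℓ - b ℓ| * ∏ k ∈ Finset.univ.erase ℓ, (if k < ℓ then |a k| else |b k|) := by
  intro n
  induction n with
  | zero => intro a b; simp
  | succ m ih =>
    intro a b
    set A : Fin m → ℝ := fun k => a k.castSucc with hA
    set B : Fin m → ℝ := fun k => b k.castSucc with hB
    have key : (∏ ℓ, a ℓ) - ∏ ℓ, b ℓ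
        = (∏ ℓ, A ℓ) * (a (Fin.last m) - b (Fin.last m))
          + ((∏ ℓ, A ℓ) - ∏ ℓ, B ℓ) * b (Fin.last m) := by
      rw [Fin.prod_univ_castSucc a, Fin.prod_univ_castSucc b]; ring
    have habs : |(∏ ℓ, a ℓ) - ∏ ℓ, b ℓ|
        ≤ (∏ ℓ, |A ℓ|) * |a (Fin.last m) - b (Fin.last m)|
          + |(∏ ℓ, A ℓ) - ∏ ℓ, B ℓ| * |b (Fin.last m)| := by
      rw [key]
      refine (abs_add_le _ _).trans ?_
      rw [abs_mul, abs_mul, abs_prod]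
    have herase_last : (Finset.univ : Finset (Fin (m+1))).erase (Fin.last m)
        = Finset.univ.image Fin.castSucc := by
      rw [Fin.image_castSucc, Finset.compl_singleton]
    have hinj : Function.Injective (Fin.castSucc : Fin m → Fin (m+1)) :=
      Fin.castSucc_injective m
    rw [Fin.sum_univ_castSucc
      (f := fun ℓ => |a ℓ - b ℓ| * ∏ k ∈ Finset.univ.erase ℓ, (if k < ℓ then |a k| else |b k|))]
    have hlastterm : |a (Fin.last m) - b (Fin.last m)| *
        ∏ k ∈ Finset.univ.erase (Fin.last m), (if k < Fin.last m then |a k| else |b k|)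
        = |a (Fin.last m) - b (Fin.last m)| * ∏ ℓ, |A ℓ| := by
      rw [herase_last, Finset.prod_image (fun x _ y _ h => hinj h)]
      congr 1
      exact Finset.prod_congr rfl fun k _ => if_pos (Fin.castSucc_lt_last k)
    have hterm : ∀ ℓ : Fin m,
        |a ℓ.castSucc - b ℓ.castSucc| *
          ∏ k ∈ Finset.univ.erase ℓ.castSucc, (if k < ℓ.castSucc then |a k| else |b k|)
        = (|A ℓ - B ℓ| * ∏ k ∈ Finset.univ.erase ℓ, (if k < ℓ then |A k| else |B k|))
            * |b (Fin.last m)| := by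
      intro ℓ
      have h1 : (Finset.univ : Finset (Fin (m+1))).erase ℓ.castSucc
          = insert (Fin.last m) ((Finset.univ.erase ℓ).image Fin.castSucc) := by
        rw [Fin.univ_castSuccEmb, Finset.cons_eq_insert,
          Finset.erase_insert_of_ne (Fin.castSucc_lt_last ℓ).ne',
          Finset.map_eq_image]
        rw [show (⇑Fin.castSuccEmb : Fin m → Fin (m+1)) = Fin.castSucc from rfl,
          ← Finset.image_erase hinj]
      have h2 : Fin.last m ∉ (Finset.univ.erase ℓ).image Fin.castSucc := by
        intro h
        obtain ⟨k, _, hk⟩ := Finset.mem_image.mp h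
        exact absurd hk (Fin.castSucc_lt_last k).ne
      rw [h1, Finset.prod_insert h2, if_neg (Fin.castSucc_lt_last ℓ).not_gt,
        Finset.prod_image (fun x _ y _ h => hinj h)]
      have : ∀ k ∈ Finset.univ.erase ℓ,
          (if k.castSucc < ℓ.castSucc then |a k.castSucc| else |b k.castSucc|)
          = (if k < ℓ then |A k| else |B k|) := by
        intro k _
        simp only [Fin.castSucc_lt_castSucc_iff, hA, hB]
      rw [Finset.prod_congr rfl this]
      ring
    calc |(∏ ℓ, a ℓ) - ∏ ℓ, b ℓ|
        ≤ (∏ ℓ, |A ℓ|) * |a (Fin.last m) - b (Fin.last m)|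
          + |(∏ ℓ, A ℓ) - ∏ ℓ, B ℓ| * |b (Fin.last m)| := habs
      _ ≤ (∏ ℓ, |A ℓ|) * |a (Fin.last m) - b (Fin.last m)|
          + (∑ ℓ, |A ℓ - B ℓ| * ∏ k ∈ Finset.univ.erase ℓ, (if k < ℓ then |A k| else |B k|))
              * |b (Fin.last m)| := by
            gcongr
            exact ih A B
      _ = _ := by
          rw [hlastterm]
          rw [Finset.sum_congr rfl fun ℓ _ => hterm ℓ, ← Finset.sum_mul]
          ring

private lemma rpow_le_one_add {t a b : ℝ} (ht : 0 ≤ t) (ha : 0 ≤ a) (hab : a ≤ b) :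
    t ^ a ≤ 1 + t ^ b := by
  rcases le_or_gt t 1 with h | h
  · have := Real.rpow_le_one ht h ha
    have := Real.rpow_nonneg ht b
    linarith
  · have h1 : t ^ a ≤ t ^ b := Real.rpow_le_rpow_of_exponent_le h.le hab
    have := Real.rpow_nonneg ht b
    linarith

set_option maxHeartbeats 1000000 in
theorem stmt1 (p p₀ : ℝ) (hp : 1 < p) (hpp₀ : p ≤ p₀) (N n : ℕ)
    (μ₁ μ₂ : Measure (Fin N → ℝ)) [IsProbabilityMeasure μ₁] [IsProbabilityMeasure μ₂]
    (hperm₁ : PermInvariant μ₁) (hperm₂ : PermInvariant μ₂)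
    (hmom₁ : ∀ i, Integrable (fun x : Fin N → ℝ => |x i| ^ p₀) μ₁)
    (hmom₂ : ∀ i, Integrable (fun x : Fin N → ℝ => |x i| ^ p₀) μ₂)
    -- `J` is a finite sequence of elements of `{1,…,N}` of length `n = n_J`,
    -- and `I` is the set of elements occurring in `J`
    (J : Fin n → Fin N)
    (hI : (Finset.image J Finset.univ).Nonempty)
    (hIN : (Finset.image J Finset.univ).card < N)
    (hn : (n : ℝ) ≤ p₀ + 1 - p₀ / p)
    (M : ℝ)
    (hM : M = if n = 1 then 1 else
      (Finset.image J Finset.univ).sup' hI fun i =>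
        max ((∫ x, |x i| ^ (p / (p - 1) * ((n : ℝ) - 1)) ∂μ₁) ^
              (1 / (p / (p - 1) * ((n : ℝ) - 1))))
            ((∫ x, |x i| ^ (p / (p - 1) * ((n : ℝ) - 1)) ∂μ₂) ^
              (1 / (p / (p - 1) * ((n : ℝ) - 1))))) :
    |(∫ x, ∏ ℓ, x (J ℓ) ∂μ₁) - ∫ x, ∏ ℓ, x (J ℓ) ∂μ₂| ≤
      (n : ℝ) * M ^ (n - 1) *
        (((Finset.image J Finset.univ).card : ℝ) /
            (1 - ((Finset.image J Finset.univ).card : ℝ) / N)) ^ (1 / p) *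
        fluctDist p N μ₁ μ₂ := by
  classical
  -- basic numeric facts
  have hn0 : n ≠ 0 := by
    rintro rfl
    simp at hI
  have hn1 : 1 ≤ n := Nat.one_le_iff_ne_zero.mpr hn0
  have hp0 : (0:ℝ) < p := lt_trans one_pos hp
  have hp1 : (0:ℝ) < p - 1 := by linarith
  have hN0 : 0 < N := lt_of_le_of_lt (Nat.zero_le _) hIN
  have hcard1 : 1 ≤ (Finset.image J Finset.univ).card := Finset.Nonempty.card_pos hI
  have hnp₀ : (n:ℝ) ≤ p₀ := by
    have h1 : 1 ≤ p₀ / p := (one_le_div hp0).mpr hpp₀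
    linarith
  set r : ℝ := p / (p - 1) * ((n : ℝ) - 1) with hrdef
  have hnR1 : (1:ℝ) ≤ (n:ℝ) := by exact_mod_cast hn1
  have hr0 : 0 ≤ r := mul_nonneg (div_nonneg hp0.le hp1.le) (by linarith)
  have hrp₀ : r ≤ p₀ := by
    have h := mul_le_mul_of_nonneg_right hn hp0.le
    rw [sub_mul, add_mul, div_mul_cancel₀ _ hp0.ne'] at h
    rw [hrdef, div_mul_eq_mul_div, div_le_iff₀ hp1]
    nlinarith
  have hM0 : 0 ≤ M := by
    rw [hM]; split_ifs with h
    · exact zero_le_one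
    · obtain ⟨i, hi⟩ := hI
      refine le_trans (le_trans ?_ (le_max_left _ _))
        (Finset.le_sup' (fun i => max ((∫ x, |x i| ^ r ∂μ₁) ^ (1/r))
          ((∫ x, |x i| ^ r ∂μ₂) ^ (1/r))) hi)
      exact Real.rpow_nonneg
        (integral_nonneg fun x => Real.rpow_nonneg (abs_nonneg _) _) _
  have hMbound₁ : ∀ k : Fin n, n ≠ 1 → (∫ x, |x (J k)| ^ r ∂μ₁) ^ (1/r) ≤ M := by
    intro k hne
    rw [hM, if_neg hne]
    exact le_trans (le_max_left _ _)
      (Finset.le_sup' (fun i => max ((∫ x, |x i| ^ r ∂μ₁) ^ (1/r))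
        ((∫ x, |x i| ^ r ∂μ₂) ^ (1/r))) (Finset.mem_image_of_mem J (Finset.mem_univ k)))
  have hMbound₂ : ∀ k : Fin n, n ≠ 1 → (∫ x, |x (J k)| ^ r ∂μ₂) ^ (1/r) ≤ M := by
    intro k hne
    rw [hM, if_neg hne]
    exact le_trans (le_max_right _ _)
      (Finset.le_sup' (fun i => max ((∫ x, |x i| ^ r ∂μ₁) ^ (1/r))
        ((∫ x, |x i| ^ r ∂μ₂) ^ (1/r))) (Finset.mem_image_of_mem J (Finset.mem_univ k)))
  -- integrability of moments of lower order
  have hint_rpow : ∀ (μ : Measure (Fin N → ℝ)), IsProbabilityMeasure μ →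
      (∀ i, Integrable (fun x : Fin N → ℝ => |x i| ^ p₀) μ) → ∀ (i : Fin N) (s : ℝ),
      0 ≤ s → s ≤ p₀ → Integrable (fun x : Fin N → ℝ => |x i| ^ s) μ := by
    intro μ hμ hmom i s hs0 hs
    haveI := hμ
    refine Integrable.mono' ((integrable_const (1:ℝ)).add (hmom i)) ?_ ?_
    · have h : Measurable fun x : Fin N → ℝ => |x i| ^ s := by
        have h0 : Measurable fun x : Fin N → ℝ => |x i| := (measurable_pi_apply i).abs
        fun_prop
      exact h.aestronglyMeasurable
    · filter_upwards with x
      rw [Real.norm_eq_abs, abs_of_nonneg (Real.rpow_nonneg (abs_nonneg _) _)]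
      exact rpow_le_one_add (abs_nonneg _) hs0 hs
  -- bound on products of coordinates
  have hprodbound : ∀ g : Fin n → ℝ, |∏ ℓ, g ℓ| ≤ ∑ ℓ, (1 + |g ℓ| ^ p₀) := by
    intro g
    haveI : Nonempty (Fin n) := ⟨⟨0, hn1⟩⟩
    obtain ⟨ℓ₀, -, hℓ₀⟩ := Finset.exists_mem_eq_sup' Finset.univ_nonempty (fun ℓ => |g ℓ|)
    have h1 : |∏ ℓ, g ℓ| = ∏ ℓ, |g ℓ| := Finset.abs_prod _ _
    have h2 : ∏ ℓ, |g ℓ| ≤ ∏ _ℓ : Fin n, |g ℓ₀| :=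
      Finset.prod_le_prod (fun ℓ _ => abs_nonneg _)
        (fun ℓ _ => hℓ₀ ▸ Finset.le_sup' (fun ℓ => |g ℓ|) (Finset.mem_univ ℓ))
    have h3 : ∏ _ℓ : Fin n, |g ℓ₀| = |g ℓ₀| ^ n := by
      rw [Finset.prod_const, Finset.card_univ, Fintype.card_fin]
    have h4 : |g ℓ₀| ^ n ≤ 1 + |g ℓ₀| ^ p₀ := by
      rw [← Real.rpow_natCast]
      exact rpow_le_one_add (abs_nonneg _) (Nat.cast_nonneg n) hnp₀
    have h5 : 1 + |g ℓ₀| ^ p₀ ≤ ∑ ℓ, (1 + |g ℓ| ^ p₀) :=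
      Finset.single_le_sum
        (fun ℓ _ => add_nonneg zero_le_one (Real.rpow_nonneg (abs_nonneg _) _))
        (Finset.mem_univ ℓ₀)
    calc |∏ ℓ, g ℓ| = ∏ ℓ, |g ℓ| := h1
      _ ≤ ∏ _ℓ : Fin n, |g ℓ₀| := h2
      _ = |g ℓ₀| ^ n := h3
      _ ≤ 1 + |g ℓ₀| ^ p₀ := h4
      _ ≤ _ := h5
  have hgm : Measurable (fun x : Fin N → ℝ => ∏ ℓ, x (J ℓ)) :=
    Finset.measurable_prod _ fun ℓ _ => measurable_pi_apply _
  have hgint : ∀ (μ : Measure (Fin N → ℝ)), IsProbabilityMeasure μ →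
      (∀ i, Integrable (fun x : Fin N → ℝ => |x i| ^ p₀) μ) →
      Integrable (fun x : Fin N → ℝ => ∏ ℓ, x (J ℓ)) μ := by
    intro μ hμ hmom
    haveI := hμ
    refine Integrable.mono'
      (integrable_finset_sum Finset.univ fun ℓ _ => (integrable_const (1:ℝ)).add (hmom (J ℓ)))
      hgm.aestronglyMeasurable ?_
    filter_upwards with x
    rw [Real.norm_eq_abs]
    exact hprodbound (fun ℓ => x (J ℓ))
  -- pointwise bound for the transport cost
  have habs_bound : ∀ a b : ℝ, |a - b| ^ p ≤ 2 ^ p * (2 + |a| ^ p₀ + |b| ^ p₀) := by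
    intro a b
    have h1 : |a - b| ≤ |a| + |b| := abs_sub a b
    have h2 : |a| + |b| ≤ 2 * max |a| |b| := by
      rcases max_cases |a| |b| with ⟨h, h'⟩ | ⟨h, h'⟩ <;> rw [h] <;> linarith
    have h3 : |a - b| ^ p ≤ (2 * max |a| |b|) ^ p :=
      Real.rpow_le_rpow (abs_nonneg _) (h1.trans h2) hp0.le
    rw [Real.mul_rpow (by norm_num) (le_max_of_le_left (abs_nonneg a))] at h3
    have h4 : (max |a| |b|) ^ p ≤ 1 + (max |a| |b|) ^ p₀ :=
      rpow_le_one_add (le_max_of_le_left (abs_nonneg a)) hp0.le hpp₀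
    have h5 : (max |a| |b|) ^ p₀ ≤ |a| ^ p₀ + |b| ^ p₀ := by
      rcases max_cases |a| |b| with ⟨h, _⟩ | ⟨h, _⟩ <;> rw [h]
      · nlinarith [Real.rpow_nonneg (abs_nonneg b) p₀]
      · nlinarith [Real.rpow_nonneg (abs_nonneg a) p₀]
    have h6 : (0:ℝ) ≤ 2 ^ p := Real.rpow_nonneg (by norm_num) _
    have h7 : (max |a| |b|) ^ p ≤ 1 + (|a| ^ p₀ + |b| ^ p₀) := by linarith
    have h8 := mul_le_mul_of_nonneg_left h7 h6
    have h9 : 2 ^ p * (1 + (|a| ^ p₀ + |b| ^ p₀)) ≤ 2 ^ p * (2 + |a| ^ p₀ + |b| ^ p₀) :=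
      mul_le_mul_of_nonneg_left (by linarith) h6
    linarith
  -- THE KEY ESTIMATE, for an arbitrary coupling
  have key : ∀ γ : Measure ((Fin N → ℝ) × (Fin N → ℝ)), IsProbabilityMeasure γ →
      γ.map Prod.fst = μ₁ → γ.map Prod.snd = μ₂ →
      |(∫ x, ∏ ℓ, x (J ℓ) ∂μ₁) - ∫ x, ∏ ℓ, x (J ℓ) ∂μ₂| ≤
        (n : ℝ) * M ^ (n - 1) *
          (∫ z, (N : ℝ)⁻¹ * ∑ i, |z.1 i - z.2 i| ^ p ∂γ) ^ (1/p) := by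
    intro γ hγp hγ1 hγ2
    haveI := hγp
    set c : ℝ := ∫ z, (N : ℝ)⁻¹ * ∑ i, |z.1 i - z.2 i| ^ p ∂γ with hcdef
    have hQcm : ∀ π : Equiv.Perm (Fin N), Measurable fun x : Fin N → ℝ => x ∘ π :=
      fun π => measurable_pi_lambda _ fun j => measurable_pi_apply _
    have hQmm : ∀ π : Equiv.Perm (Fin N),
        Measurable fun z : (Fin N → ℝ) × (Fin N → ℝ) => (z.1 ∘ π, z.2 ∘ π) :=
      fun π => ((hQcm π).comp measurable_fst).prodMk ((hQcm π).comp measurable_snd)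
    set c₀ : ℝ≥0∞ := (Fintype.card (Equiv.Perm (Fin N)) : ℝ≥0∞) with hc₀
    have hc₀0 : c₀ ≠ 0 := by
      rw [hc₀]
      exact_mod_cast (Fintype.card_ne_zero : Fintype.card (Equiv.Perm (Fin N)) ≠ 0)
    have hc₀top : c₀ ≠ ⊤ := by rw [hc₀]; exact ENNReal.natCast_ne_top _
    set ν : Measure ((Fin N → ℝ) × (Fin N → ℝ)) :=
      c₀⁻¹ • ∑ π : Equiv.Perm (Fin N),
        γ.map (fun z : (Fin N → ℝ) × (Fin N → ℝ) => (z.1 ∘ π, z.2 ∘ π)) with hν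
    have hνapply : ∀ s : Set ((Fin N → ℝ) × (Fin N → ℝ)), MeasurableSet s →
        ν s = c₀⁻¹ * ∑ π : Equiv.Perm (Fin N),
          γ ((fun z : (Fin N → ℝ) × (Fin N → ℝ) => (z.1 ∘ π, z.2 ∘ π)) ⁻¹' s) := by
      intro s hs
      rw [hν, Measure.smul_apply, Measure.finset_sum_apply, smul_eq_mul]
      congr 1
      exact Finset.sum_congr rfl fun π _ => Measure.map_apply (hQmm π) hs
    have hmarg1 : ν.map Prod.fst = μ₁ := by
      refine Measure.ext fun s hs => ?_
      rw [Measure.map_apply measurable_fst hs, hνapply _ (measurable_fst hs)]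
      have heach : ∀ π : Equiv.Perm (Fin N),
          γ ((fun z : (Fin N → ℝ) × (Fin N → ℝ) => (z.1 ∘ π, z.2 ∘ π)) ⁻¹' (Prod.fst ⁻¹' s))
            = μ₁ s := by
        intro π
        have hpre : (fun z : (Fin N → ℝ) × (Fin N → ℝ) => (z.1 ∘ π, z.2 ∘ π)) ⁻¹'
            (Prod.fst ⁻¹' s) = Prod.fst ⁻¹' ((fun x : Fin N → ℝ => x ∘ π) ⁻¹' s) := rfl
        rw [hpre, ← Measure.map_apply measurable_fst ((hQcm π) hs), hγ1,
          ← Measure.map_apply (hQcm π) hs, hperm₁ π]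
      rw [Finset.sum_congr rfl fun π _ => heach π, Finset.sum_const, nsmul_eq_mul,
        Finset.card_univ, ← hc₀, ← mul_assoc, ENNReal.inv_mul_cancel hc₀0 hc₀top, one_mul]
    have hmarg2 : ν.map Prod.snd = μ₂ := by
      refine Measure.ext fun s hs => ?_
      rw [Measure.map_apply measurable_snd hs, hνapply _ (measurable_snd hs)]
      have heach : ∀ π : Equiv.Perm (Fin N),
          γ ((fun z : (Fin N → ℝ) × (Fin N → ℝ) => (z.1 ∘ π, z.2 ∘ π)) ⁻¹' (Prod.snd ⁻¹' s))
            = μ₂ s := by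
        intro π
        have hpre : (fun z : (Fin N → ℝ) × (Fin N → ℝ) => (z.1 ∘ π, z.2 ∘ π)) ⁻¹'
            (Prod.snd ⁻¹' s) = Prod.snd ⁻¹' ((fun x : Fin N → ℝ => x ∘ π) ⁻¹' s) := rfl
        rw [hpre, ← Measure.map_apply measurable_snd ((hQcm π) hs), hγ2,
          ← Measure.map_apply (hQcm π) hs, hperm₂ π]
      rw [Finset.sum_congr rfl fun π _ => heach π, Finset.sum_const, nsmul_eq_mul,
        Finset.card_univ, ← hc₀, ← mul_assoc, ENNReal.inv_mul_cancel hc₀0 hc₀top, one_mul]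
    have hνuniv : ν Set.univ = 1 := by
      have h1 : (ν.map Prod.fst) Set.univ = ν Set.univ := by
        rw [Measure.map_apply measurable_fst MeasurableSet.univ, Set.preimage_univ]
      rw [hmarg1, measure_univ] at h1
      exact h1.symm
    haveI hνprob : IsProbabilityMeasure ν := ⟨hνuniv⟩
    have hνlint : ∀ f : ((Fin N → ℝ) × (Fin N → ℝ)) → ℝ≥0∞, Measurable f →
        ∫⁻ z, f z ∂ν = c₀⁻¹ * ∑ π : Equiv.Perm (Fin N),
          ∫⁻ z, f (z.1 ∘ π, z.2 ∘ π) ∂γ := by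
      intro f hf
      rw [hν, lintegral_smul_measure, lintegral_finset_sum_measure]
      congr 1
      exact Finset.sum_congr rfl fun π _ => lintegral_map hf (hQmm π)
    have hswap : ∀ σ : Equiv.Perm (Fin N),
        ν.map (fun z : (Fin N → ℝ) × (Fin N → ℝ) => (z.1 ∘ σ, z.2 ∘ σ)) = ν := by
      intro σ
      refine Measure.ext fun s hs => ?_
      rw [Measure.map_apply (hQmm σ) hs, hνapply _ ((hQmm σ) hs), hνapply _ hs]
      congr 1
      have hcomp : ∀ π : Equiv.Perm (Fin N),
          (fun z : (Fin N → ℝ) × (Fin N → ℝ) => (z.1 ∘ π, z.2 ∘ π)) ⁻¹'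
            ((fun z : (Fin N → ℝ) × (Fin N → ℝ) => (z.1 ∘ σ, z.2 ∘ σ)) ⁻¹' s)
          = (fun z : (Fin N → ℝ) × (Fin N → ℝ) => (z.1 ∘ (π * σ), z.2 ∘ (π * σ))) ⁻¹' s := by
        intro π; rfl
      rw [Finset.sum_congr rfl fun π _ => congrArg γ (hcomp π)]
      exact Fintype.sum_equiv (Equiv.mulRight σ) _ _ (fun π => rfl)
    -- coordinate cost functions
    set fC : Fin N → ((Fin N → ℝ) × (Fin N → ℝ)) → ℝ≥0∞ :=
      fun i z => ENNReal.ofReal (|z.1 i - z.2 i| ^ p) with hfC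
    have hfCm : ∀ i, Measurable (fC i) := by
      intro i
      have h1 : Measurable fun z : (Fin N → ℝ) × (Fin N → ℝ) => z.1 i :=
        (measurable_pi_apply i).comp measurable_fst
      have h2 : Measurable fun z : (Fin N → ℝ) × (Fin N → ℝ) => z.2 i :=
        (measurable_pi_apply i).comp measurable_snd
      fun_prop
    set L : Fin N → ℝ≥0∞ := fun i => ∫⁻ z, fC i z ∂ν with hL
    have hLswap : ∀ (σ : Equiv.Perm (Fin N)) (i : Fin N), L i = L (σ i) := by
      intro σ i
      calc L i = ∫⁻ z, fC i z ∂(ν.map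
            (fun z : (Fin N → ℝ) × (Fin N → ℝ) => (z.1 ∘ σ, z.2 ∘ σ))) := by rw [hswap]
        _ = ∫⁻ z, fC i (z.1 ∘ σ, z.2 ∘ σ) ∂ν := lintegral_map (hfCm i) (hQmm σ)
        _ = L (σ i) := rfl
    -- integrability of the cost
    have hmomγ1 : ∀ i, Integrable (fun z : (Fin N → ℝ) × (Fin N → ℝ) => |z.1 i| ^ p₀) γ := by
      intro i
      have hmeas : Measurable fun x : Fin N → ℝ => |x i| ^ p₀ := by
        have h0 : Measurable fun x : Fin N → ℝ => |x i| := (measurable_pi_apply i).abs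
        fun_prop
      have h := integrable_map_measure (f := (Prod.fst : (Fin N → ℝ) × (Fin N → ℝ) → Fin N → ℝ))
        (g := fun x : Fin N → ℝ => |x i| ^ p₀) (μ := γ) hmeas.aestronglyMeasurable
        measurable_fst.aemeasurable
      rw [hγ1] at h
      exact h.mp (hmom₁ i)
    have hmomγ2 : ∀ i, Integrable (fun z : (Fin N → ℝ) × (Fin N → ℝ) => |z.2 i| ^ p₀) γ := by
      intro i
      have hmeas : Measurable fun x : Fin N → ℝ => |x i| ^ p₀ := by
        have h0 : Measurable fun x : Fin N → ℝ => |x i| := (measurable_pi_apply i).abs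
        fun_prop
      have h := integrable_map_measure (f := (Prod.snd : (Fin N → ℝ) × (Fin N → ℝ) → Fin N → ℝ))
        (g := fun x : Fin N → ℝ => |x i| ^ p₀) (μ := γ) hmeas.aestronglyMeasurable
        measurable_snd.aemeasurable
      rw [hγ2] at h
      exact h.mp (hmom₂ i)
    have hcoordm : ∀ i, Measurable fun z : (Fin N → ℝ) × (Fin N → ℝ) => |z.1 i - z.2 i| ^ p := by
      intro i
      have h1 : Measurable fun z : (Fin N → ℝ) × (Fin N → ℝ) => z.1 i :=
        (measurable_pi_apply i).comp measurable_fst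
      have h2 : Measurable fun z : (Fin N → ℝ) × (Fin N → ℝ) => z.2 i :=
        (measurable_pi_apply i).comp measurable_snd
      fun_prop
    have hcoordint : ∀ i, Integrable
        (fun z : (Fin N → ℝ) × (Fin N → ℝ) => |z.1 i - z.2 i| ^ p) γ := by
      intro i
      refine Integrable.mono'
        ((((integrable_const (2:ℝ)).add (hmomγ1 i)).add (hmomγ2 i)).const_mul (2 ^ p))
        (hcoordm i).aestronglyMeasurable ?_
      filter_upwards with z
      rw [Real.norm_eq_abs, abs_of_nonneg (Real.rpow_nonneg (abs_nonneg _) _)]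
      exact habs_bound _ _
    have hcost_int : Integrable
        (fun z : (Fin N → ℝ) × (Fin N → ℝ) => (N : ℝ)⁻¹ * ∑ i, |z.1 i - z.2 i| ^ p) γ :=
      (integrable_finset_sum Finset.univ fun i _ => hcoordint i).const_mul _
    have hc0 : 0 ≤ c := by
      rw [hcdef]
      exact integral_nonneg fun z => mul_nonneg (by positivity)
        (Finset.sum_nonneg fun i _ => Real.rpow_nonneg (abs_nonneg _) _)
    have hofc : ENNReal.ofReal c = ∫⁻ z, (N : ℝ≥0∞)⁻¹ * ∑ i, fC i z ∂γ := by
      rw [hcdef, ofReal_integral_eq_lintegral_ofReal hcost_int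
        (Filter.Eventually.of_forall fun z => mul_nonneg (by positivity)
          (Finset.sum_nonneg fun i _ => Real.rpow_nonneg (abs_nonneg _) _))]
      congr 1
      funext z
      rw [ENNReal.ofReal_mul (by positivity),
        ENNReal.ofReal_sum_of_nonneg (fun i _ => Real.rpow_nonneg (abs_nonneg _) _),
        ENNReal.ofReal_inv_of_pos (by exact_mod_cast hN0), ENNReal.ofReal_natCast]
    have hNn0 : ((N:ℕ) : ℝ≥0∞) ≠ 0 := by
      exact_mod_cast hN0.ne'
    have hNtop : ((N:ℕ) : ℝ≥0∞) ≠ ⊤ := ENNReal.natCast_ne_top _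
    have hGm : Measurable fun z : (Fin N → ℝ) × (Fin N → ℝ) =>
        (N : ℝ≥0∞)⁻¹ * ∑ i, fC i z := by
      refine Measurable.const_mul ?_ _
      exact Finset.measurable_sum _ fun i _ => hfCm i
    have hlintν_cost : ∫⁻ z, (N : ℝ≥0∞)⁻¹ * ∑ i, fC i z ∂ν = ENNReal.ofReal c := by
      rw [hνlint _ hGm]
      have heach : ∀ π : Equiv.Perm (Fin N),
          (∫⁻ z, (N : ℝ≥0∞)⁻¹ * ∑ i, fC i (z.1 ∘ π, z.2 ∘ π) ∂γ)
            = ∫⁻ z, (N : ℝ≥0∞)⁻¹ * ∑ i, fC i z ∂γ := by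
        intro π
        congr 1
        funext z
        congr 1
        exact Equiv.sum_comp π (fun i => fC i z)
      rw [Finset.sum_congr rfl fun π _ => heach π, Finset.sum_const, nsmul_eq_mul,
        Finset.card_univ, ← hc₀, ← mul_assoc, ENNReal.inv_mul_cancel hc₀0 hc₀top, one_mul,
        hofc]
    have hLsum : ∑ i, L i = (N : ℝ≥0∞) * ENNReal.ofReal c := by
      have h1 : ∫⁻ z, ∑ i, fC i z ∂ν = ∑ i, L i :=
        lintegral_finset_sum _ (fun i _ => hfCm i)
      have h2 : ∫⁻ z, (N : ℝ≥0∞)⁻¹ * ∑ i, fC i z ∂ν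
          = (N : ℝ≥0∞)⁻¹ * ∫⁻ z, ∑ i, fC i z ∂ν :=
        lintegral_const_mul _ (Finset.measurable_sum _ fun i _ => hfCm i)
      calc ∑ i, L i = (N : ℝ≥0∞) * ((N : ℝ≥0∞)⁻¹ * ∑ i, L i) := by
            rw [← mul_assoc, ENNReal.mul_inv_cancel hNn0 hNtop, one_mul]
        _ = (N : ℝ≥0∞) * ENNReal.ofReal c := by rw [← h1, ← h2, hlintν_cost]
    have hLc : ∀ i, L i = ENNReal.ofReal c := by
      intro i
      have hall : ∀ j, L j = L i := by
        intro j
        have := hLswap (Equiv.swap j i) j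
        rwa [Equiv.swap_apply_left] at this
      have hsum2 : ∑ j, L j = (N : ℝ≥0∞) * L i := by
        rw [Finset.sum_congr rfl fun j _ => hall j, Finset.sum_const, nsmul_eq_mul,
          Finset.card_univ, Fintype.card_fin]
      rw [hLsum] at hsum2
      exact ((ENNReal.mul_right_inj hNn0 hNtop).mp hsum2.symm)
    -- integrability of the coordinate products
    have hg1 := hgint μ₁ inferInstance hmom₁
    have hg2 := hgint μ₂ inferInstance hmom₂
    have hF1int : Integrable (fun z : (Fin N → ℝ) × (Fin N → ℝ) => ∏ ℓ, z.1 (J ℓ)) ν := by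
      have h := integrable_map_measure (f := (Prod.fst : (Fin N → ℝ) × (Fin N → ℝ) → Fin N → ℝ))
        (g := fun x : Fin N → ℝ => ∏ ℓ, x (J ℓ)) hgm.aestronglyMeasurable
        measurable_fst.aemeasurable (μ := ν)
      rw [hmarg1] at h
      exact h.mp hg1
    have hF2int : Integrable (fun z : (Fin N → ℝ) × (Fin N → ℝ) => ∏ ℓ, z.2 (J ℓ)) ν := by
      have h := integrable_map_measure (f := (Prod.snd : (Fin N → ℝ) × (Fin N → ℝ) → Fin N → ℝ))
        (g := fun x : Fin N → ℝ => ∏ ℓ, x (J ℓ)) hgm.aestronglyMeasurable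
        measurable_snd.aemeasurable (μ := ν)
      rw [hmarg2] at h
      exact h.mp hg2
    have hΔeq : (∫ x, ∏ ℓ, x (J ℓ) ∂μ₁) - ∫ x, ∏ ℓ, x (J ℓ) ∂μ₂
        = ∫ z, ((∏ ℓ, z.1 (J ℓ)) - ∏ ℓ, z.2 (J ℓ)) ∂ν := by
      rw [integral_sub hF1int hF2int]
      congr 1
      · rw [← hmarg1, integral_map measurable_fst.aemeasurable hgm.aestronglyMeasurable]
      · rw [← hmarg2, integral_map measurable_snd.aemeasurable hgm.aestronglyMeasurable]
    -- the telescoping bound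
    set T : Fin n → ((Fin N → ℝ) × (Fin N → ℝ)) → ℝ := fun ℓ z =>
      |z.1 (J ℓ) - z.2 (J ℓ)| *
        ∏ k ∈ Finset.univ.erase ℓ, (if k < ℓ then |z.1 (J k)| else |z.2 (J k)|) with hT
    have hTnn : ∀ ℓ z, 0 ≤ T ℓ z := by
      intro ℓ z
      refine mul_nonneg (abs_nonneg _) (Finset.prod_nonneg fun k _ => ?_)
      split_ifs <;> exact abs_nonneg _
    have hTm : ∀ ℓ, Measurable (T ℓ) := by
      intro ℓ
      have h1 : Measurable fun z : (Fin N → ℝ) × (Fin N → ℝ) => |z.1 (J ℓ) - z.2 (J ℓ)| := by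
        have ha : Measurable fun z : (Fin N → ℝ) × (Fin N → ℝ) => z.1 (J ℓ) :=
          (measurable_pi_apply _).comp measurable_fst
        have hb : Measurable fun z : (Fin N → ℝ) × (Fin N → ℝ) => z.2 (J ℓ) :=
          (measurable_pi_apply _).comp measurable_snd
        fun_prop
      refine h1.mul (Finset.measurable_prod _ fun k _ => ?_)
      split_ifs
      · exact ((measurable_pi_apply _).comp measurable_fst).abs
      · exact ((measurable_pi_apply _).comp measurable_snd).abs
    have htel : ∀ z : (Fin N → ℝ) × (Fin N → ℝ),
        |(∏ ℓ, z.1 (J ℓ)) - ∏ ℓ, z.2 (J ℓ)| ≤ ∑ ℓ, T ℓ z :=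
      fun z => telesc n (fun ℓ => z.1 (J ℓ)) (fun ℓ => z.2 (J ℓ))
    -- Hoelder estimate for each telescoping term
    have hterm : ∀ ℓ : Fin n, ∫⁻ z, ENNReal.ofReal (T ℓ z) ∂ν
        ≤ ENNReal.ofReal M ^ (n - 1) * ENNReal.ofReal c ^ (1/p) := by
      intro ℓ
      set F : Option (Fin n) → ((Fin N → ℝ) × (Fin N → ℝ)) → ℝ≥0∞ := fun o z =>
        match o with
        | none => 1
        | some k =>
          if k = ℓ then ENNReal.ofReal (|z.1 (J ℓ) - z.2 (J ℓ)| ^ p)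
          else if k < ℓ then ENNReal.ofReal (|z.1 (J k)| ^ r)
          else ENNReal.ofReal (|z.2 (J k)| ^ r) with hFdef
      set e : Option (Fin n) → ℝ := fun o =>
        match o with
        | none => 1 - 1/p - ((n:ℝ) - 1) * (1/r)
        | some k => if k = ℓ then 1/p else 1/r with hedef
      have hFnone : ∀ z, F none z = 1 := fun z => by rw [hFdef]
      have hFsome : ∀ k z, F (some k) z =
          (if k = ℓ then ENNReal.ofReal (|z.1 (J ℓ) - z.2 (J ℓ)| ^ p)
          else if k < ℓ then ENNReal.ofReal (|z.1 (J k)| ^ r)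
          else ENNReal.ofReal (|z.2 (J k)| ^ r)) := fun k z => by rw [hFdef]
      have henone : e none = 1 - 1/p - ((n:ℝ) - 1) * (1/r) := by rw [hedef]
      have hesome : ∀ k, e (some k) = if k = ℓ then 1/p else 1/r := fun k => by rw [hedef]
      have hFm : ∀ o : Option (Fin n), Measurable (F o) := by
        rintro (_ | k)
        · have hEq : F none = fun _ : (Fin N → ℝ) × (Fin N → ℝ) => (1:ℝ≥0∞) := funext hFnone
          rw [hEq]; exact measurable_const
        · have hEq := funext (hFsome k)
          rw [hEq]
          have ha : Measurable fun z : (Fin N → ℝ) × (Fin N → ℝ) => z.1 (J k) :=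
            (measurable_pi_apply _).comp measurable_fst
          have hb : Measurable fun z : (Fin N → ℝ) × (Fin N → ℝ) => z.2 (J k) :=
            (measurable_pi_apply _).comp measurable_snd
          split_ifs with h1 h2
          · exact hfCm (J ℓ)
          · fun_prop
          · fun_prop
      have hesum : ∑ o : Option (Fin n), e o = 1 := by
        rw [Fintype.sum_option]
        have h1 : ∑ k : Fin n, e (some k) = 1/p + ((n:ℝ) - 1) * (1/r) := by
          rw [← Finset.add_sum_erase Finset.univ _ (Finset.mem_univ ℓ), hesome ℓ, if_pos rfl]
          congr 1
          rw [Finset.sum_congr rfl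
              (fun k hk => by rw [hesome k, if_neg (Finset.ne_of_mem_erase hk)]),
            Finset.sum_const, nsmul_eq_mul, Finset.card_erase_of_mem (Finset.mem_univ ℓ),
            Finset.card_univ, Fintype.card_fin, Nat.cast_sub hn1, Nat.cast_one]
        rw [h1, henone]; ring
      have he0 : ∀ o ∈ (Finset.univ : Finset (Option (Fin n))), 0 ≤ e o := by
        rintro (_ | k) -
        · rw [henone]
          rcases eq_or_ne n 1 with h1 | h1
          · have hz : ((n:ℝ) - 1) = 0 := by rw [h1]; norm_num
            rw [hz, zero_mul, sub_zero]
            have hple : 1/p ≤ 1 := by rw [div_le_one hp0]; linarith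
            linarith
          · have h2 : 2 ≤ n := by omega
            have h2' : (2:ℝ) ≤ (n:ℝ) := by exact_mod_cast h2
            have hne : ((n:ℝ) - 1) ≠ 0 := ne_of_gt (by linarith)
            have heq : ((n:ℝ) - 1) * (1/r) = (p - 1)/p := by
              rw [hrdef]; field_simp
            rw [heq]
            have heq2 : (p - 1)/p = 1 - 1/p := by field_simp
            rw [heq2]; linarith
        · rw [hesome]; split_ifs
          · positivity
          · exact one_div_nonneg.mpr hr0
      have h2n_of : ∀ k : Fin n, k ≠ ℓ → 2 ≤ n := by
        intro k hk
        have h1 := k.is_lt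
        have h2 := ℓ.is_lt
        have h3 : k.val ≠ ℓ.val := fun h => hk (Fin.ext h)
        omega
      have hrpos_of : ∀ k : Fin n, k ≠ ℓ → 0 < r := by
        intro k hk
        have h2 : (2:ℝ) ≤ (n:ℝ) := by exact_mod_cast h2n_of k hk
        rw [hrdef]
        exact mul_pos (div_pos hp0 hp1) (by linarith)
      have hcancel : ∀ t : ℝ, 0 ≤ t → ∀ s : ℝ, 0 < s →
          ENNReal.ofReal (t ^ s) ^ (1/s) = ENNReal.ofReal t := by
        intro t ht s hs
        rw [ENNReal.ofReal_rpow_of_nonneg (Real.rpow_nonneg ht _) (by positivity),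
          ← Real.rpow_mul ht, mul_one_div_cancel hs.ne', Real.rpow_one]
      have hTF : ∀ z, ENNReal.ofReal (T ℓ z) = ∏ o : Option (Fin n), F o z ^ e o := by
        intro z
        rw [Fintype.prod_option, hFnone z, ENNReal.one_rpow, one_mul,
          ← Finset.mul_prod_erase Finset.univ _ (Finset.mem_univ ℓ)]
        have hhead : F (some ℓ) z ^ e (some ℓ) = ENNReal.ofReal |z.1 (J ℓ) - z.2 (J ℓ)| := by
          rw [hFsome, hesome, if_pos rfl, if_pos rfl, hcancel _ (abs_nonneg _) _ hp0]
        have htail : ∏ k ∈ Finset.univ.erase ℓ, F (some k) z ^ e (some k)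
            = ENNReal.ofReal (∏ k ∈ Finset.univ.erase ℓ,
                (if k < ℓ then |z.1 (J k)| else |z.2 (J k)|)) := by
          rw [ENNReal.ofReal_prod_of_nonneg (fun k _ => by split_ifs <;> exact abs_nonneg _)]
          refine Finset.prod_congr rfl fun k hk => ?_
          have hkl := Finset.ne_of_mem_erase hk
          have hrpos := hrpos_of k hkl
          rw [hFsome, hesome, if_neg hkl, if_neg hkl]
          by_cases h : k < ℓ
          · rw [if_pos h, if_pos h, hcancel _ (abs_nonneg _) _ hrpos]
          · rw [if_neg h, if_neg h, hcancel _ (abs_nonneg _) _ hrpos]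
        rw [hhead, htail, ← ENNReal.ofReal_mul (abs_nonneg _)]
      have hHold := ENNReal.lintegral_prod_norm_pow_le (μ := ν) Finset.univ
        (f := fun o z => F o z) (fun o _ => (hFm o).aemeasurable) (p := e) hesum he0
      have hheadint : ∫⁻ z, F (some ℓ) z ∂ν = ENNReal.ofReal c := by
        have hEq : F (some ℓ) = fC (J ℓ) := by
          funext z; rw [hFsome, if_pos rfl, hfC]
        rw [hEq]
        exact hLc (J ℓ)
      have htailint : ∀ k : Fin n, k ≠ ℓ →
          (∫⁻ z, F (some k) z ∂ν) ^ (1/r) ≤ ENNReal.ofReal M := by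
        intro k hkl
        have h2n := h2n_of k hkl
        have hne1 : n ≠ 1 := by omega
        have hrpos := hrpos_of k hkl
        have hmr : Measurable fun x : Fin N → ℝ => |x (J k)| ^ r := by
          have h0 : Measurable fun x : Fin N → ℝ => |x (J k)| := (measurable_pi_apply _).abs
          fun_prop
        by_cases h : k < ℓ
        · have hFk : F (some k) = fun z : (Fin N → ℝ) × (Fin N → ℝ) =>
              ENNReal.ofReal (|z.1 (J k)| ^ r) := by
            funext z; rw [hFsome, if_neg hkl, if_pos h]
          rw [hFk]
          have hlm : ∫⁻ z : (Fin N → ℝ) × (Fin N → ℝ), ENNReal.ofReal (|z.1 (J k)| ^ r) ∂ν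
              = ∫⁻ x, ENNReal.ofReal (|x (J k)| ^ r) ∂μ₁ := by
            rw [← hmarg1, lintegral_map hmr.ennreal_ofReal measurable_fst]
          rw [hlm, ← ofReal_integral_eq_lintegral_ofReal
            (hint_rpow μ₁ inferInstance hmom₁ (J k) r hr0 hrp₀)
            (Filter.Eventually.of_forall fun x => Real.rpow_nonneg (abs_nonneg _) _),
            ENNReal.ofReal_rpow_of_nonneg
              (integral_nonneg fun x => Real.rpow_nonneg (abs_nonneg _) _)
              (by positivity)]
          exact ENNReal.ofReal_le_ofReal (hMbound₁ k hne1)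
        · have hFk : F (some k) = fun z : (Fin N → ℝ) × (Fin N → ℝ) =>
              ENNReal.ofReal (|z.2 (J k)| ^ r) := by
            funext z; rw [hFsome, if_neg hkl, if_neg h]
          rw [hFk]
          have hlm : ∫⁻ z : (Fin N → ℝ) × (Fin N → ℝ), ENNReal.ofReal (|z.2 (J k)| ^ r) ∂ν
              = ∫⁻ x, ENNReal.ofReal (|x (J k)| ^ r) ∂μ₂ := by
            rw [← hmarg2, lintegral_map hmr.ennreal_ofReal measurable_snd]
          rw [hlm, ← ofReal_integral_eq_lintegral_ofReal
            (hint_rpow μ₂ inferInstance hmom₂ (J k) r hr0 hrp₀)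
            (Filter.Eventually.of_forall fun x => Real.rpow_nonneg (abs_nonneg _) _),
            ENNReal.ofReal_rpow_of_nonneg
              (integral_nonneg fun x => Real.rpow_nonneg (abs_nonneg _) _)
              (by positivity)]
          exact ENNReal.ofReal_le_ofReal (hMbound₂ k hne1)
      have hRHS : ∏ o : Option (Fin n), (∫⁻ z, F o z ∂ν) ^ e o
          ≤ ENNReal.ofReal M ^ (n - 1) * ENNReal.ofReal c ^ (1/p) := by
        rw [Fintype.prod_option]
        have h1 : (∫⁻ z, F none z ∂ν) ^ e none = 1 := by
          have hEq : F none = fun _ : (Fin N → ℝ) × (Fin N → ℝ) => (1:ℝ≥0∞) := funext hFnone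
          rw [hEq, lintegral_one, measure_univ, ENNReal.one_rpow]
        rw [h1, one_mul, ← Finset.mul_prod_erase Finset.univ _ (Finset.mem_univ ℓ)]
        have h2 : (∫⁻ z, F (some ℓ) z ∂ν) ^ e (some ℓ) = ENNReal.ofReal c ^ (1/p) := by
          rw [hheadint, hesome, if_pos rfl]
        have h3 : ∏ k ∈ Finset.univ.erase ℓ, (∫⁻ z, F (some k) z ∂ν) ^ e (some k)
            ≤ ENNReal.ofReal M ^ (n - 1) := by
          have hle : ∀ k ∈ Finset.univ.erase ℓ,
              (∫⁻ z, F (some k) z ∂ν) ^ e (some k) ≤ ENNReal.ofReal M := by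
            intro k hk
            have hkl := Finset.ne_of_mem_erase hk
            rw [hesome, if_neg hkl]
            exact htailint k hkl
          calc ∏ k ∈ Finset.univ.erase ℓ, (∫⁻ z, F (some k) z ∂ν) ^ e (some k)
              ≤ ∏ _k ∈ Finset.univ.erase ℓ, ENNReal.ofReal M := Finset.prod_le_prod' hle
            _ = ENNReal.ofReal M ^ (n - 1) := by
                rw [Finset.prod_const, Finset.card_erase_of_mem (Finset.mem_univ ℓ),
                  Finset.card_univ, Fintype.card_fin]
        calc (∫⁻ z, F (some ℓ) z ∂ν) ^ e (some ℓ)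
              * ∏ k ∈ Finset.univ.erase ℓ, (∫⁻ z, F (some k) z ∂ν) ^ e (some k)
            ≤ ENNReal.ofReal c ^ (1/p) * ENNReal.ofReal M ^ (n - 1) := by
              rw [h2]; exact mul_le_mul_right h3 _
          _ = ENNReal.ofReal M ^ (n - 1) * ENNReal.ofReal c ^ (1/p) := mul_comm _ _
      calc ∫⁻ z, ENNReal.ofReal (T ℓ z) ∂ν
          = ∫⁻ z, ∏ o : Option (Fin n), F o z ^ e o ∂ν := by
            congr 1; funext z; exact hTF z
        _ ≤ ∏ o : Option (Fin n), (∫⁻ z, F o z ∂ν) ^ e o := hHold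
        _ ≤ _ := hRHS
    -- put everything together
    have hmain : ∫⁻ z, ENNReal.ofReal |(∏ ℓ, z.1 (J ℓ)) - ∏ ℓ, z.2 (J ℓ)| ∂ν
        ≤ (n : ℝ≥0∞) * (ENNReal.ofReal M ^ (n - 1) * ENNReal.ofReal c ^ (1/p)) := by
      have step1 : ∫⁻ z, ENNReal.ofReal |(∏ ℓ, z.1 (J ℓ)) - ∏ ℓ, z.2 (J ℓ)| ∂ν
          ≤ ∫⁻ z, ∑ ℓ, ENNReal.ofReal (T ℓ z) ∂ν := by
        refine lintegral_mono fun z => ?_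
        rw [← ENNReal.ofReal_sum_of_nonneg (fun ℓ _ => hTnn ℓ z)]
        exact ENNReal.ofReal_le_ofReal (htel z)
      have step2 : ∫⁻ z, ∑ ℓ, ENNReal.ofReal (T ℓ z) ∂ν
          = ∑ ℓ, ∫⁻ z, ENNReal.ofReal (T ℓ z) ∂ν :=
        lintegral_finset_sum _ fun ℓ _ => (hTm ℓ).ennreal_ofReal
      calc ∫⁻ z, ENNReal.ofReal |(∏ ℓ, z.1 (J ℓ)) - ∏ ℓ, z.2 (J ℓ)| ∂ν
          ≤ ∑ ℓ, ∫⁻ z, ENNReal.ofReal (T ℓ z) ∂ν := step1.trans_eq step2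
        _ ≤ ∑ _ℓ : Fin n, ENNReal.ofReal M ^ (n - 1) * ENNReal.ofReal c ^ (1/p) :=
            Finset.sum_le_sum fun ℓ _ => hterm ℓ
        _ = (n : ℝ≥0∞) * (ENNReal.ofReal M ^ (n - 1) * ENNReal.ofReal c ^ (1/p)) := by
            rw [Finset.sum_const, nsmul_eq_mul, Finset.card_univ, Fintype.card_fin]
    have hRHS0 : 0 ≤ (n : ℝ) * M ^ (n - 1) * c ^ (1/p) :=
      mul_nonneg (mul_nonneg (Nat.cast_nonneg n) (pow_nonneg hM0 _))
        (Real.rpow_nonneg hc0 _)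
    have hfinal : ENNReal.ofReal |(∫ x, ∏ ℓ, x (J ℓ) ∂μ₁) - ∫ x, ∏ ℓ, x (J ℓ) ∂μ₂|
        ≤ ENNReal.ofReal ((n : ℝ) * M ^ (n - 1) * c ^ (1/p)) := by
      calc ENNReal.ofReal |(∫ x, ∏ ℓ, x (J ℓ) ∂μ₁) - ∫ x, ∏ ℓ, x (J ℓ) ∂μ₂|
          = ENNReal.ofReal |∫ z, ((∏ ℓ, z.1 (J ℓ)) - ∏ ℓ, z.2 (J ℓ)) ∂ν| := by rw [hΔeq]
        _ ≤ ENNReal.ofReal (∫ z, |(∏ ℓ, z.1 (J ℓ)) - ∏ ℓ, z.2 (J ℓ)| ∂ν) := by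
            refine ENNReal.ofReal_le_ofReal ?_
            simpa [Real.norm_eq_abs] using norm_integral_le_integral_norm
              (μ := ν) (fun z : (Fin N → ℝ) × (Fin N → ℝ) =>
                (∏ ℓ, z.1 (J ℓ)) - ∏ ℓ, z.2 (J ℓ))
        _ = ∫⁻ z, ENNReal.ofReal |(∏ ℓ, z.1 (J ℓ)) - ∏ ℓ, z.2 (J ℓ)| ∂ν :=
            ofReal_integral_eq_lintegral_ofReal (hF1int.sub hF2int).abs
              (Filter.Eventually.of_forall fun z => abs_nonneg _)
        _ ≤ (n : ℝ≥0∞) * (ENNReal.ofReal M ^ (n - 1) * ENNReal.ofReal c ^ (1/p)) := hmain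
        _ = ENNReal.ofReal ((n : ℝ) * M ^ (n - 1) * c ^ (1/p)) := by
            rw [ENNReal.ofReal_mul (mul_nonneg (Nat.cast_nonneg n) (pow_nonneg hM0 _)),
              ENNReal.ofReal_mul (Nat.cast_nonneg n), ENNReal.ofReal_pow hM0,
              ENNReal.ofReal_natCast,
              ENNReal.ofReal_rpow_of_nonneg hc0 (by positivity), mul_assoc]
    exact (ENNReal.ofReal_le_ofReal_iff hRHS0).mp hfinal
  -- FINAL ASSEMBLY
  set S : Set ℝ := {c : ℝ | ∃ γ : Measure ((Fin N → ℝ) × (Fin N → ℝ)),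
      IsProbabilityMeasure γ ∧ γ.map Prod.fst = μ₁ ∧ γ.map Prod.snd = μ₂ ∧
      c = ∫ xy, (N : ℝ)⁻¹ * ∑ i, |xy.1 i - xy.2 i| ^ p ∂γ} with hSdef
  have hfd : fluctDist p N μ₁ μ₂ = sInf S ^ (1 / p) := rfl
  have hS0 : ∀ c ∈ S, 0 ≤ c := by
    rintro c ⟨γ, hγp, h1, h2, rfl⟩
    exact integral_nonneg fun z => mul_nonneg (by positivity)
      (Finset.sum_nonneg fun i _ => Real.rpow_nonneg (abs_nonneg _) _)
  have hSne : S.Nonempty := by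
    refine ⟨_, μ₁.prod μ₂, inferInstance, ?_, ?_, rfl⟩
    · rw [Measure.map_fst_prod]; simp
    · rw [Measure.map_snd_prod]; simp
  have hkey' : ∀ c ∈ S, |(∫ x, ∏ ℓ, x (J ℓ) ∂μ₁) - ∫ x, ∏ ℓ, x (J ℓ) ∂μ₂| ≤
      (n : ℝ) * M ^ (n - 1) * c ^ (1/p) := by
    rintro c ⟨γ, hγp, h1, h2, rfl⟩
    exact key γ hγp h1 h2
  set D : ℝ := |(∫ x, ∏ ℓ, x (J ℓ) ∂μ₁) - ∫ x, ∏ ℓ, x (J ℓ) ∂μ₂| with hD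
  set K : ℝ := (n : ℝ) * M ^ (n - 1) with hK
  have hK0 : 0 ≤ K := mul_nonneg (Nat.cast_nonneg n) (pow_nonneg hM0 _)
  have hs0 : 0 ≤ sInf S := le_csInf hSne hS0
  have hDK : D ≤ K * sInf S ^ (1/p) := by
    rcases eq_or_lt_of_le hK0 with hK' | hK'
    · obtain ⟨c, hc⟩ := hSne
      have h := hkey' c hc
      rw [← hK'] at h ⊢
      simp only [zero_mul] at h ⊢
      exact h
    · have hstep : ∀ c ∈ S, (D / K) ^ p ≤ c := by
        intro c hc
        have h1 : D / K ≤ c ^ (1/p) := (div_le_iff₀' hK').mpr (hkey' c hc)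
        have h2 : (D / K) ^ p ≤ (c ^ (1/p)) ^ p :=
          Real.rpow_le_rpow (div_nonneg (abs_nonneg _) hK0) h1 hp0.le
        rwa [← Real.rpow_mul (hS0 c hc), one_div_mul_cancel hp0.ne', Real.rpow_one] at h2
      have h3 : (D / K) ^ p ≤ sInf S := le_csInf hSne hstep
      have h4 : ((D / K) ^ p) ^ (1/p) ≤ sInf S ^ (1/p) :=
        Real.rpow_le_rpow (Real.rpow_nonneg (div_nonneg (abs_nonneg _) hK0) _) h3
          (by positivity)
      rw [← Real.rpow_mul (div_nonneg (abs_nonneg _) hK0), mul_one_div_cancel hp0.ne',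
        Real.rpow_one] at h4
      calc D = K * (D / K) := by field_simp
        _ ≤ K * sInf S ^ (1/p) := mul_le_mul_of_nonneg_left h4 hK0
  -- the geometric factor is at least 1
  have hkN : ((Finset.image J Finset.univ).card : ℝ) / N < 1 := by
    rw [div_lt_one (by exact_mod_cast hN0)]
    exact_mod_cast hIN
  have hden : (0:ℝ) < 1 - ((Finset.image J Finset.univ).card : ℝ) / N := by linarith
  have hB1 : (1:ℝ) ≤ (((Finset.image J Finset.univ).card : ℝ) /
      (1 - ((Finset.image J Finset.univ).card : ℝ) / N)) ^ (1 / p) := by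
    refine Real.one_le_rpow ?_ (by positivity)
    rw [one_le_div hden]
    have h1 : (1:ℝ) ≤ ((Finset.image J Finset.univ).card : ℝ) := by exact_mod_cast hcard1
    have h2 : (0:ℝ) ≤ ((Finset.image J Finset.univ).card : ℝ) / N :=
      div_nonneg (Nat.cast_nonneg _) (Nat.cast_nonneg _)
    linarith
  calc D ≤ K * sInf S ^ (1/p) := hDK
    _ ≤ K * ((((Finset.image J Finset.univ).card : ℝ) /
          (1 - ((Finset.image J Finset.univ).card : ℝ) / N)) ^ (1 / p) * sInf S ^ (1/p)) := by
        refine mul_le_mul_of_nonneg_left ?_ hK0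
        refine le_mul_of_one_le_left (Real.rpow_nonneg hs0 _) hB1
    _ = K * (((Finset.image J Finset.univ).card : ℝ) /
          (1 - ((Finset.image J Finset.univ).card : ℝ) / N)) ^ (1 / p) *
          fluctDist p N μ₁ μ₂ := by rw [hfd]; ring
end

section
/- Let p ≥ 1 and N ∈ ℕ. Let (μ^{ε'})_{ε'∈ℝ} be a Markov kernel from ℝ to ℝ^N such that each μ^{ε'} is a permutation invariant probability measure with finite p-th moments, let ν be a Borel probability measure on ℝ with finite second moment, and let μ_C := ∫ μ^{ε'} ν(dε') be the corresponding mixture measure on ℝ^N. Fix ε ∈ ℝ and C > 0, and assume that w_p(μ^{ε}, μ^{ε'}; N) ≤ C·|ε − ε'| for ν-almost every ε'. Then for every nonempty I ⊆ {1,…,N} with |I| < N and every bounded function f : ℝ^{|I|} → ℝ that is 1-Lipschitz with respect to the ℓ^p-norm, |∫ f∘P_I dμ^{ε} − ∫ f∘P_I dμ_C| ≤ C · (|I| / (1 − |I|/N))^{1/p} · ( σ(ν) + |ε − m(ν)| ), where m(ν) := ∫ ε' ν(dε') is the mean of ν and σ(ν) := (∫ (ε' − m(ν))² ν(dε'))^{1/2}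 is its standard deviation. -/
open MeasureTheory
open ProbabilityTheory

lemma contRpow {q : ℝ} (hq : 0 < q) : Continuous fun x : ℝ => x ^ q :=
  continuous_iff_continuousAt.2 fun x => Real.continuousAt_rpow_const x q (Or.inr hq.le)

lemma rpow_sub_bound {p : ℝ} (hp : 0 ≤ p) (a b : ℝ) :
    |a - b| ^ p ≤ 2 ^ p * (|a| ^ p + |b| ^ p) := by
  have h0 : |a - b| ≤ 2 * max |a| |b| := by
    calc |a - b| ≤ |a| + |b| := abs_sub a b
    _ ≤ 2 * max |a| |b| := by rcases max_cases |a| |b| with ⟨h, h'⟩ | ⟨h, h'⟩ <;> nlinarith [abs_nonneg a, abs_nonneg b]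
  calc |a - b| ^ p ≤ (2 * max |a| |b|) ^ p := Real.rpow_le_rpow (abs_nonneg _) h0 hp
  _ = 2 ^ p * (max |a| |b|) ^ p := Real.mul_rpow (by norm_num) (le_max_of_le_left (abs_nonneg a))
  _ ≤ 2 ^ p * (|a| ^ p + |b| ^ p) := by
      gcongr
      rcases max_cases |a| |b| with ⟨h, _⟩ | ⟨h, _⟩ <;> rw [h]
      · exact le_add_of_nonneg_right (Real.rpow_nonneg (abs_nonneg _) _)
      · exact le_add_of_nonneg_left (Real.rpow_nonneg (abs_nonneg _) _)

lemma continuous_of_lip {p : ℝ} (hp : 1 ≤ p) {n : ℕ} (f : (Fin n → ℝ) → ℝ)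
    (hfL : ∀ a b, |f a - f b| ≤ (∑ j, |a j - b j| ^ p) ^ (1 / p)) : Continuous f := by
  rw [continuous_iff_continuousAt]
  intro a
  rw [ContinuousAt, tendsto_iff_dist_tendsto_zero]
  have hcont : Filter.Tendsto (fun b => (∑ j, |b j - a j| ^ p) ^ (1 / p)) (nhds a) (nhds 0) := by
    have : Continuous fun b : Fin n → ℝ => (∑ j, |b j - a j| ^ p) ^ (1 / p) := by
      apply (contRpow (by positivity)).comp
      exact continuous_finset_sum _ fun j _ =>
        (contRpow (by linarith)).comp ((continuous_apply j).sub continuous_const).abs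
    have h0 : (∑ j : Fin n, |a j - a j| ^ p) ^ (1 / p) = 0 := by
      have hpne : p ≠ 0 := by linarith
      simp only [sub_self, abs_zero, Real.zero_rpow hpne, Finset.sum_const_zero]
      exact Real.zero_rpow (by positivity)
    have h1 := this.tendsto a
    rwa [h0] at h1
  refine squeeze_zero (fun b => dist_nonneg) (fun b => ?_) hcont
  rw [Real.dist_eq]
  exact hfL b a

lemma jensen_rpow {p : ℝ} (hp : 1 ≤ p) {α : Type*} [MeasurableSpace α] (γ : Measure α)
    [IsProbabilityMeasure γ] (g : α → ℝ) (hg0 : ∀ x, 0 ≤ g x) (hgi : Integrable g γ) :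
    ∫ x, (g x) ^ (1 / p) ∂γ ≤ (∫ x, g x ∂γ) ^ (1 / p) := by
  have hconc : ConcaveOn ℝ (Set.Ici 0) fun t : ℝ => t ^ (1/p) :=
    Real.concaveOn_rpow (by positivity) (by rw [div_le_one (by linarith)]; linarith)
  refine hconc.le_map_integral ((contRpow (by positivity)).continuousOn) isClosed_Ici
    (Filter.Eventually.of_forall fun x => hg0 x) hgi ?_
  refine ((integrable_const (1:ℝ)).add hgi).mono' ?_ (Filter.Eventually.of_forall fun x => ?_)
  · exact ((contRpow (by positivity)).comp_aestronglyMeasurable hgi.1)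
  · rw [Function.comp_apply, Real.norm_eq_abs, abs_of_nonneg (Real.rpow_nonneg (hg0 x) _)]
    have : 1/p ≤ 1 := by rw [div_le_one (by linarith)]; linarith
    rcases le_or_gt (g x) 1 with h | h
    · calc (g x) ^ (1/p) ≤ (1:ℝ) ^ (1/p) := Real.rpow_le_rpow (hg0 x) h (by positivity)
      _ = 1 := Real.one_rpow _
      _ ≤ 1 + g x := by linarith [hg0 x]
    · calc (g x) ^ (1/p) ≤ (g x) ^ (1:ℝ) := Real.rpow_le_rpow_of_exponent_le h.le this
      _ = g x := Real.rpow_one _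
      _ ≤ 1 + g x := by linarith

lemma perm_sum {N : ℕ} (h : Fin N → ℝ) (i₀ : Fin N) :
    (N : ℝ) * ∑ π : Equiv.Perm (Fin N), h (π i₀) = (N.factorial : ℝ) * ∑ i, h i := by
  have key : ∀ i₁ : Fin N, ∑ π : Equiv.Perm (Fin N), h (π i₀) = ∑ π : Equiv.Perm (Fin N), h (π i₁) := by
    intro i₁
    exact Fintype.sum_equiv (Equiv.mulRight (Equiv.swap i₀ i₁)) _ _ (fun π => by
      simp [Equiv.Perm.mul_apply])
  have htot : ∑ i : Fin N, ∑ π : Equiv.Perm (Fin N), h (π i) = (N.factorial : ℝ) * ∑ i, h i := by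
    rw [Finset.sum_comm]
    have : ∀ π : Equiv.Perm (Fin N), ∑ i : Fin N, h (π i) = ∑ i, h i := fun π =>
      Fintype.sum_equiv π _ _ fun i => rfl
    simp only [this, Finset.sum_const, Finset.card_univ, Fintype.card_perm, Fintype.card_fin,
      nsmul_eq_mul]
  have : ∑ i : Fin N, ∑ π : Equiv.Perm (Fin N), h (π i) = (N : ℝ) * ∑ π : Equiv.Perm (Fin N), h (π i₀) := by
    rw [Finset.sum_congr rfl fun i _ => (key i).symm]
    simp [Finset.sum_const, mul_comm]
  linarith [this, htot]

lemma coupling_bound {p : ℝ} (hp : 1 ≤ p) {N : ℕ}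
    (μ₁ μ₂ : Measure (Fin N → ℝ)) [IsProbabilityMeasure μ₁] [IsProbabilityMeasure μ₂]
    (h1 : PermInvariant μ₁) (h2 : PermInvariant μ₂)
    (hm1 : ∀ i, Integrable (fun x : Fin N → ℝ => |x i| ^ p) μ₁)
    (hm2 : ∀ i, Integrable (fun x : Fin N → ℝ => |x i| ^ p) μ₂)
    (I : Finset (Fin N)) (hN : 0 < N)
    (f : (Fin I.card → ℝ) → ℝ) (B : ℝ) (hfB : ∀ a, |f a| ≤ B)
    (hfL : ∀ a b, |f a - f b| ≤ (∑ j, |a j - b j| ^ p) ^ (1 / p))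
    (γ : Measure ((Fin N → ℝ) × (Fin N → ℝ))) [IsProbabilityMeasure γ]
    (hfst : γ.map Prod.fst = μ₁) (hsnd : γ.map Prod.snd = μ₂) :
    |(∫ x, f (projI I rfl x) ∂μ₁) - ∫ x, f (projI I rfl x) ∂μ₂| ≤
      ((I.card : ℝ) * ∫ xy, (N : ℝ)⁻¹ * ∑ i, |xy.1 i - xy.2 i| ^ p ∂γ) ^ (1 / p) := by
  have hp0 : (0:ℝ) < p := by linarith
  set F : (Fin N → ℝ) → ℝ := fun x => f (projI I rfl x) with hF
  have hFc : Continuous F := (continuous_of_lip hp f hfL).comp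
    (continuous_pi fun j => continuous_apply _)
  have hFb : ∀ x, |F x| ≤ B := fun x => hfB _
  have Qc : ∀ π : Equiv.Perm (Fin N), Continuous fun x : Fin N → ℝ => x ∘ π :=
    fun π => continuous_pi fun j => continuous_apply _
  -- coordinate integrability
  have hcic : ∀ i : Fin N, Continuous fun xy : (Fin N → ℝ) × (Fin N → ℝ) => |xy.1 i - xy.2 i| ^ p :=
    fun i => (contRpow hp0).comp
      (((continuous_apply i).comp continuous_fst).sub ((continuous_apply i).comp continuous_snd)).abs
  have hco : ∀ i : Fin N, Integrable (fun xy : (Fin N → ℝ) × (Fin N → ℝ) => |xy.1 i - xy.2 i| ^ p) γ := by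
    intro i
    have c1 : Continuous fun x : Fin N → ℝ => |x i| ^ p :=
      (contRpow hp0).comp (continuous_apply i).abs
    have h1' : Integrable (fun xy : (Fin N → ℝ) × (Fin N → ℝ) => |xy.1 i| ^ p) γ := by
      have h := hm1 i; rw [← hfst] at h
      exact (integrable_map_measure c1.aestronglyMeasurable measurable_fst.aemeasurable).mp h
    have h2' : Integrable (fun xy : (Fin N → ℝ) × (Fin N → ℝ) => |xy.2 i| ^ p) γ := by
      have h := hm2 i; rw [← hsnd] at h
      exact (integrable_map_measure c1.aestronglyMeasurable measurable_snd.aemeasurable).mp h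
    refine ((h1'.add h2').const_mul (2 ^ p)).mono' (hcic i).aestronglyMeasurable
      (Filter.Eventually.of_forall fun xy => ?_)
    rw [Real.norm_eq_abs, abs_of_nonneg (Real.rpow_nonneg (abs_nonneg _) _)]
    exact rpow_sub_bound (by linarith) _ _
  set hcoord : Fin N → ℝ := fun i => ∫ xy, |xy.1 i - xy.2 i| ^ p ∂γ with hhc
  have hh0 : ∀ i, 0 ≤ hcoord i := fun i =>
    integral_nonneg fun xy => Real.rpow_nonneg (abs_nonneg _) _
  set c : ℝ := ∫ xy, (N : ℝ)⁻¹ * ∑ i, |xy.1 i - xy.2 i| ^ p ∂γ with hcc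
  have hc : c = (N:ℝ)⁻¹ * ∑ i, hcoord i := by
    rw [hcc, integral_const_mul, integral_finset_sum _ fun i _ => hco i]
  -- index map
  set e : Fin I.card → Fin N := fun j => ↑(I.orderIsoOfFin rfl j) with he
  set g : Equiv.Perm (Fin N) → ((Fin N → ℝ) × (Fin N → ℝ)) → ℝ :=
    fun π xy => ∑ j, |xy.1 (π (e j)) - xy.2 (π (e j))| ^ p with hg
  have hgc : ∀ π, Continuous (g π) := fun π =>
    continuous_finset_sum _ fun j _ => (contRpow hp0).comp
      (((continuous_apply _).comp continuous_fst).sub ((continuous_apply _).comp continuous_snd)).abs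
  have hg0 : ∀ π xy, 0 ≤ g π xy := fun π xy =>
    Finset.sum_nonneg fun j _ => Real.rpow_nonneg (abs_nonneg _) _
  have hgi : ∀ π, Integrable (g π) γ := fun π =>
    integrable_finset_sum _ fun j _ => hco (π (e j))
  set z : Equiv.Perm (Fin N) → ℝ := fun π => ∫ xy, g π xy ∂γ with hz
  have hz0 : ∀ π, 0 ≤ z π := fun π => integral_nonneg fun xy => hg0 π xy
  have hzval : ∀ π, z π = ∑ j, hcoord (π (e j)) := fun π =>
    integral_finset_sum _ fun j _ => hco (π (e j))
  -- the difference equals coupled integral for each permutation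
  set D : ℝ := (∫ x, F x ∂μ₁) - ∫ x, F x ∂μ₂ with hD
  have hFIγ : ∀ (π : Equiv.Perm (Fin N)),
      Integrable (fun xy : (Fin N → ℝ) × (Fin N → ℝ) => F (xy.1 ∘ π)) γ ∧
      Integrable (fun xy : (Fin N → ℝ) × (Fin N → ℝ) => F (xy.2 ∘ π)) γ := by
    intro π
    constructor
    · refine (integrable_const B).mono'
        ((hFc.comp ((Qc π).comp continuous_fst)).aestronglyMeasurable)
        (Filter.Eventually.of_forall fun xy => ?_)
      rw [Real.norm_eq_abs]; exact hFb _
    · refine (integrable_const B).mono'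
        ((hFc.comp ((Qc π).comp continuous_snd)).aestronglyMeasurable)
        (Filter.Eventually.of_forall fun xy => ?_)
      rw [Real.norm_eq_abs]; exact hFb _
  have key : ∀ π : Equiv.Perm (Fin N),
      D = ∫ xy, (F (xy.1 ∘ π) - F (xy.2 ∘ π)) ∂γ := by
    intro π
    have Qm : Measurable fun x : Fin N → ℝ => x ∘ π := (Qc π).measurable
    have hFQc : Continuous fun x : Fin N → ℝ => F (x ∘ π) := hFc.comp (Qc π)
    have e1 : ∫ x, F x ∂μ₁ = ∫ xy, F (xy.1 ∘ π) ∂γ := by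
      conv_lhs => rw [← h1 π]
      rw [integral_map Qm.aemeasurable hFc.aestronglyMeasurable, ← hfst,
        integral_map measurable_fst.aemeasurable hFQc.aestronglyMeasurable]
    have e2 : ∫ x, F x ∂μ₂ = ∫ xy, F (xy.2 ∘ π) ∂γ := by
      conv_lhs => rw [← h2 π]
      rw [integral_map Qm.aemeasurable hFc.aestronglyMeasurable, ← hsnd,
        integral_map measurable_snd.aemeasurable hFQc.aestronglyMeasurable]
    rw [hD, e1, e2, ← integral_sub (hFIγ π).1 (hFIγ π).2]
  -- pointwise Lipschitz bound
  have hpt : ∀ (π : Equiv.Perm (Fin N)) xy, |F (xy.1 ∘ π) - F (xy.2 ∘ π)| ≤ (g π xy) ^ (1/p) :=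
    fun π xy => hfL (projI I rfl (xy.1 ∘ π)) (projI I rfl (xy.2 ∘ π))
  -- integrability of g^{1/p}
  have hgpi : ∀ π, Integrable (fun xy => (g π xy) ^ (1/p)) γ := by
    intro π
    refine ((integrable_const (1:ℝ)).add (hgi π)).mono'
      ((contRpow (by positivity)).comp (hgc π)).aestronglyMeasurable
      (Filter.Eventually.of_forall fun xy => ?_)
    rw [Real.norm_eq_abs, abs_of_nonneg (Real.rpow_nonneg (hg0 π xy) _)]
    rcases le_or_gt (g π xy) 1 with h | h
    · calc (g π xy) ^ (1/p) ≤ (1:ℝ) ^ (1/p) := Real.rpow_le_rpow (hg0 π xy) h (by positivity)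
      _ = 1 := Real.one_rpow _
      _ ≤ 1 + g π xy := by linarith [hg0 π xy]
    · have hple : 1/p ≤ 1 := by rw [div_le_one hp0]; linarith
      calc (g π xy) ^ (1/p) ≤ (g π xy) ^ (1:ℝ) := Real.rpow_le_rpow_of_exponent_le h.le hple
      _ = g π xy := Real.rpow_one _
      _ ≤ 1 + g π xy := by linarith
  have hDπ : ∀ π : Equiv.Perm (Fin N), |D| ≤ (z π) ^ (1/p) := by
    intro π
    calc |D| = ‖∫ xy, (F (xy.1 ∘ π) - F (xy.2 ∘ π)) ∂γ‖ := by rw [key π, Real.norm_eq_abs]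
    _ ≤ ∫ xy, ‖F (xy.1 ∘ π) - F (xy.2 ∘ π)‖ ∂γ := norm_integral_le_integral_norm _
    _ ≤ ∫ xy, (g π xy) ^ (1/p) ∂γ := by
        refine integral_mono ((hFIγ π).1.sub (hFIγ π).2).norm (hgpi π) fun xy => ?_
        rw [Real.norm_eq_abs]; exact hpt π xy
    _ ≤ (z π) ^ (1/p) := jensen_rpow hp γ (g π) (hg0 π) (hgi π)
  -- averaging over permutations
  set W : ℝ := (N.factorial : ℝ) with hWdef
  have hW : 0 < W := by positivity
  have hcard : (Finset.univ : Finset (Equiv.Perm (Fin N))).card = N.factorial := by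
    rw [Finset.card_univ, Fintype.card_perm, Fintype.card_fin]
  have hsum1 : ∑ _π : Equiv.Perm (Fin N), W⁻¹ = 1 := by
    rw [Finset.sum_const, hcard, nsmul_eq_mul]
    field_simp
    exact hWdef.symm
  have havg := Real.arith_mean_le_rpow_mean Finset.univ (fun _ => W⁻¹)
    (fun π => (z π) ^ (1/p)) (fun _ _ => by positivity) hsum1
    (fun π _ => Real.rpow_nonneg (hz0 π) _) hp
  have hsimp : ∀ π : Equiv.Perm (Fin N), ((z π) ^ (1/p)) ^ p = z π := by
    intro π
    rw [← Real.rpow_mul (hz0 π), one_div_mul_cancel (ne_of_gt hp0), Real.rpow_one]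
  have hNne : (N:ℝ) ≠ 0 := Nat.cast_ne_zero.2 hN.ne'
  have hzsum : ∑ π : Equiv.Perm (Fin N), W⁻¹ * z π = (I.card : ℝ) * c := by
    have hps : ∀ j : Fin I.card,
        ∑ π : Equiv.Perm (Fin N), hcoord (π (e j)) = W * (∑ i, hcoord i) / N := by
      intro j
      rw [eq_div_iff hNne]
      have := perm_sum hcoord (e j)
      rw [hWdef]; linarith
    calc ∑ π : Equiv.Perm (Fin N), W⁻¹ * z π = W⁻¹ * ∑ π : Equiv.Perm (Fin N), z π := by
          rw [← Finset.mul_sum]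
    _ = W⁻¹ * ∑ π : Equiv.Perm (Fin N), ∑ j, hcoord (π (e j)) := by simp only [hzval]
    _ = W⁻¹ * ∑ j, ∑ π : Equiv.Perm (Fin N), hcoord (π (e j)) := by rw [Finset.sum_comm]
    _ = W⁻¹ * ∑ _j : Fin I.card, W * (∑ i, hcoord i) / N := by simp only [hps]
    _ = (I.card : ℝ) * c := by
        rw [Finset.sum_const, Finset.card_univ, Fintype.card_fin, nsmul_eq_mul, hc]
        field_simp
  calc |D| = ∑ _π : Equiv.Perm (Fin N), W⁻¹ * |D| := by
        rw [← Finset.sum_mul, hsum1, one_mul]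
  _ ≤ ∑ π : Equiv.Perm (Fin N), W⁻¹ * (z π) ^ (1/p) := by
        refine Finset.sum_le_sum fun π _ => mul_le_mul_of_nonneg_left (hDπ π) (by positivity)
  _ ≤ (∑ π : Equiv.Perm (Fin N), W⁻¹ * ((z π) ^ (1/p)) ^ p) ^ (1/p) := havg
  _ = (∑ π : Equiv.Perm (Fin N), W⁻¹ * z π) ^ (1/p) := by simp only [hsimp]
  _ = ((I.card : ℝ) * c) ^ (1/p) := by rw [hzsum]

lemma dist_le_fluct {p : ℝ} (hp : 1 ≤ p) {N : ℕ}
    (μ₁ μ₂ : Measure (Fin N → ℝ)) [IsProbabilityMeasure μ₁] [IsProbabilityMeasure μ₂]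
    (h1 : PermInvariant μ₁) (h2 : PermInvariant μ₂)
    (hm1 : ∀ i, Integrable (fun x : Fin N → ℝ => |x i| ^ p) μ₁)
    (hm2 : ∀ i, Integrable (fun x : Fin N → ℝ => |x i| ^ p) μ₂)
    (I : Finset (Fin N)) (hN : 0 < N) (hI : I.Nonempty)
    (f : (Fin I.card → ℝ) → ℝ) (B : ℝ) (hfB : ∀ a, |f a| ≤ B)
    (hfL : ∀ a b, |f a - f b| ≤ (∑ j, |a j - b j| ^ p) ^ (1 / p)) :
    |(∫ x, f (projI I rfl x) ∂μ₁) - ∫ x, f (projI I rfl x) ∂μ₂| ≤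
      (I.card : ℝ) ^ (1 / p) * fluctDist p N μ₁ μ₂ := by
  have hp0 : (0:ℝ) < p := by linarith
  set S := {c : ℝ | ∃ γ : Measure ((Fin N → ℝ) × (Fin N → ℝ)), IsProbabilityMeasure γ ∧
      γ.map Prod.fst = μ₁ ∧ γ.map Prod.snd = μ₂ ∧
      c = ∫ xy, (N : ℝ)⁻¹ * ∑ i, |xy.1 i - xy.2 i| ^ p ∂γ} with hS
  have hSne : S.Nonempty := by
    refine ⟨_, μ₁.prod μ₂, inferInstance, ?_, ?_, rfl⟩
    · rw [Measure.map_fst_prod]; simp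
    · rw [Measure.map_snd_prod]; simp
  have hSlb : ∀ c ∈ S, (0:ℝ) ≤ c := by
    rintro c ⟨γ, hγp, -, -, rfl⟩
    exact integral_nonneg fun xy => mul_nonneg (by positivity)
      (Finset.sum_nonneg fun i _ => Real.rpow_nonneg (abs_nonneg _) _)
  have hn0 : (0:ℝ) < (I.card : ℝ) := by
    exact_mod_cast Finset.card_pos.2 hI
  set D := (∫ x, f (projI I rfl x) ∂μ₁) - ∫ x, f (projI I rfl x) ∂μ₂ with hD
  have hub : ∀ c ∈ S, |D| ^ p / (I.card : ℝ) ≤ c := by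
    rintro c ⟨γ, hγp, hfst, hsnd, rfl⟩
    haveI := hγp
    have h := coupling_bound hp μ₁ μ₂ h1 h2 hm1 hm2 I hN f B hfB hfL γ hfst hsnd
    rw [div_le_iff₀ hn0, mul_comm]
    have hc0 : 0 ≤ (I.card : ℝ) * ∫ xy, (N : ℝ)⁻¹ * ∑ i, |xy.1 i - xy.2 i| ^ p ∂γ :=
      mul_nonneg hn0.le (hSlb _ ⟨γ, hγp, hfst, hsnd, rfl⟩)
    calc |D| ^ p ≤ (((I.card : ℝ) * ∫ xy, (N : ℝ)⁻¹ * ∑ i, |xy.1 i - xy.2 i| ^ p ∂γ) ^ (1/p)) ^ p :=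
          Real.rpow_le_rpow (abs_nonneg _) h hp0.le
    _ = (I.card : ℝ) * ∫ xy, (N : ℝ)⁻¹ * ∑ i, |xy.1 i - xy.2 i| ^ p ∂γ := by
          rw [← Real.rpow_mul hc0, one_div_mul_cancel (ne_of_gt hp0), Real.rpow_one]
  have hinf0 : 0 ≤ sInf S := le_csInf hSne hSlb
  have hinfD : |D| ^ p / (I.card : ℝ) ≤ sInf S := le_csInf hSne hub
  have hDp : |D| ^ p ≤ (I.card : ℝ) * sInf S := by
    rw [div_le_iff₀ hn0] at hinfD; linarith [hinfD]
  have : |D| ≤ ((I.card : ℝ) * sInf S) ^ (1/p) := by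
    calc |D| = (|D| ^ p) ^ (1/p) := by
          rw [← Real.rpow_mul (abs_nonneg _), mul_one_div_cancel (ne_of_gt hp0), Real.rpow_one]
    _ ≤ ((I.card : ℝ) * sInf S) ^ (1/p) :=
          Real.rpow_le_rpow (by positivity) hDp (by positivity)
  calc |D| ≤ ((I.card : ℝ) * sInf S) ^ (1/p) := this
  _ = (I.card : ℝ) ^ (1/p) * (sInf S) ^ (1/p) := Real.mul_rpow hn0.le hinf0
  _ = (I.card : ℝ) ^ (1/p) * fluctDist p N μ₁ μ₂ := rfl

theorem stmt2 (p : ℝ) (hp : 1 ≤ p) (N : ℕ)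
    -- the Markov kernel `ε' ↦ μ^{ε'}`
    (κ : ProbabilityTheory.Kernel ℝ (Fin N → ℝ)) [ProbabilityTheory.IsMarkovKernel κ]
    (hperm : ∀ ε' : ℝ, PermInvariant (κ ε'))
    (hmom : ∀ (ε' : ℝ) (i : Fin N), Integrable (fun x : Fin N → ℝ => |x i| ^ p) (κ ε'))
    -- the mixing measure `ν`, with finite second moment
    (ν : Measure ℝ) [IsProbabilityMeasure ν]
    (hν : Integrable (fun t : ℝ => t ^ 2) ν)
    (ε C : ℝ) (hC : 0 < C)
    (hw : ∀ᵐ ε' ∂ν, fluctDist p N (κ ε) (κ ε') ≤ C * |ε - ε'|)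
    (I : Finset (Fin N)) (hI : I.Nonempty) (hIN : I.card < N)
    (f : (Fin I.card → ℝ) → ℝ)
    (hfB : ∃ B, ∀ a, |f a| ≤ B)
    (hfL : ∀ a b, |f a - f b| ≤ (∑ j, |a j - b j| ^ p) ^ (1 / p)) :
    |(∫ x, f (projI I rfl x) ∂(κ ε)) - ∫ x, f (projI I rfl x) ∂(ν.bind fun e => κ e)| ≤
      C * ((I.card : ℝ) / (1 - (I.card : ℝ) / N)) ^ (1 / p) *
        (Real.sqrt (∫ s, (s - ∫ t, t ∂ν) ^ 2 ∂ν) + |ε - ∫ t, t ∂ν|) := by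
  obtain ⟨B, hfB⟩ := hfB
  have hp0 : (0:ℝ) < p := by linarith
  have hN : 0 < N := lt_of_le_of_lt (Nat.zero_le _) hIN
  have hNne : (N:ℝ) ≠ 0 := Nat.cast_ne_zero.2 hN.ne'
  set F : (Fin N → ℝ) → ℝ := fun x => f (projI I rfl x) with hF
  have hFc : Continuous F := (continuous_of_lip hp f hfL).comp
    (continuous_pi fun j => continuous_apply _)
  have hFb : ∀ x, |F x| ≤ B := fun x => hfB _
  set φ : ℝ → ℝ := fun ε' => ∫ x, F x ∂(κ ε') with hφ
  have hφm : StronglyMeasurable φ := by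
    have h : StronglyMeasurable (Function.uncurry fun (_ : ℝ) (x : Fin N → ℝ) => F x) :=
      (hFc.comp continuous_snd).stronglyMeasurable
    exact h.integral_kernel_prod_right
  have hφb : ∀ ε', |φ ε'| ≤ B := by
    intro ε'
    rw [← Real.norm_eq_abs]
    calc ‖∫ x, F x ∂(κ ε')‖ ≤ ∫ _x, B ∂(κ ε') :=
          norm_integral_le_of_norm_le (integrable_const B)
            (Filter.Eventually.of_forall fun x => by rw [Real.norm_eq_abs]; exact hFb x)
    _ = B := by simp
  have hφI : Integrable φ ν :=
    (integrable_const B).mono' hφm.aestronglyMeasurable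
      (Filter.Eventually.of_forall fun ε' => by rw [Real.norm_eq_abs]; exact hφb ε')
  -- the bind integral
  haveI : IsProbabilityMeasure (ν ⊗ₘ κ) :=
    ⟨by rw [Measure.compProd_apply_univ]; exact measure_univ⟩
  have hsndeq : (ν ⊗ₘ κ).map Prod.snd = ν.bind (fun e => κ e) := by
    ext s hs
    rw [Measure.map_apply measurable_snd hs, Measure.compProd_apply (measurable_snd hs),
      Measure.bind_apply hs (κ.measurable.aemeasurable)]
    rfl
  have hbind : ∫ x, F x ∂(ν.bind fun e => κ e) = ∫ ε', φ ε' ∂ν := by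
    rw [← hsndeq, integral_map measurable_snd.aemeasurable hFc.aestronglyMeasurable]
    have hint : Integrable (fun z : ℝ × (Fin N → ℝ) => F z.2) (ν ⊗ₘ κ) :=
      (integrable_const B).mono' (hFc.comp continuous_snd).aestronglyMeasurable
        (Filter.Eventually.of_forall fun z => by rw [Real.norm_eq_abs]; exact hFb _)
    rw [Measure.integral_compProd hint]
  -- constants
  set m : ℝ := ∫ t, t ∂ν with hm
  set K : ℝ := ((I.card : ℝ) / (1 - (I.card : ℝ) / N)) ^ (1 / p) with hK
  have hNpos : (0:ℝ) < N := by exact_mod_cast hN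
  have hnN : (I.card : ℝ) / N < 1 := by
    rw [div_lt_one hNpos]; exact_mod_cast hIN
  have hd0 : 0 < 1 - (I.card : ℝ) / N := by linarith
  have hd1 : 1 - (I.card : ℝ) / N ≤ 1 := by
    have : (0:ℝ) ≤ (I.card : ℝ) / N := by positivity
    linarith
  have hKge : (I.card : ℝ) ^ (1/p) ≤ K := by
    apply Real.rpow_le_rpow (Nat.cast_nonneg _) ?_ (by positivity)
    calc (I.card : ℝ) = (I.card : ℝ) / 1 := (div_one _).symm
    _ ≤ (I.card : ℝ) / (1 - (I.card:ℝ)/N) := by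
        rw [div_le_div_iff₀ one_pos hd0]
        have h0 : (0:ℝ) ≤ (I.card:ℝ) := Nat.cast_nonneg _
        nlinarith
  have hK0 : 0 ≤ K := Real.rpow_nonneg (div_nonneg (Nat.cast_nonneg _) hd0.le) _
  -- integrability facts on ν
  have habs : Integrable (fun t : ℝ => |t|) ν := by
    refine ((integrable_const 1).add hν).mono' continuous_abs.aestronglyMeasurable
      (Filter.Eventually.of_forall fun t => ?_)
    simp only [Pi.add_apply]
    rw [Real.norm_eq_abs, abs_abs]
    nlinarith [sq_nonneg (|t| - 1), sq_abs t]
  have hid : Integrable (fun t : ℝ => t) ν := by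
    refine habs.mono' continuous_id.aestronglyMeasurable
      (Filter.Eventually.of_forall fun t => ?_)
    rw [Real.norm_eq_abs]
  have hεabs : Integrable (fun t : ℝ => |ε - t|) ν := by
    refine ((integrable_const |ε|).add habs).mono'
      ((continuous_const.sub continuous_id).abs.aestronglyMeasurable)
      (Filter.Eventually.of_forall fun t => ?_)
    simp only [Pi.add_apply]
    rw [Real.norm_eq_abs, abs_abs]
    exact abs_sub ε t
  have habs_m : Integrable (fun t : ℝ => |t - m|) ν := by
    refine ((integrable_const |m|).add habs).mono'
      ((continuous_id.sub continuous_const).abs.aestronglyMeasurable)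
      (Filter.Eventually.of_forall fun t => ?_)
    simp only [Pi.add_apply]
    rw [Real.norm_eq_abs, abs_abs]
    calc |t - m| ≤ |t| + |m| := abs_sub t m
    _ = |m| + |t| := add_comm _ _
  have hsqm : Integrable (fun t : ℝ => (t - m)^2) ν := by
    have h : Integrable (fun t : ℝ => t^2 - (2*m)*t + m^2) ν :=
      (hν.sub (hid.const_mul (2*m))).add (integrable_const _)
    exact h.congr (Filter.Eventually.of_forall fun t => by ring)
  -- Cauchy–Schwarz
  set s0 : ℝ := ∫ t, |t - m| ∂ν with hs0
  have hs00 : 0 ≤ s0 := integral_nonneg fun t => abs_nonneg _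
  have hCS : s0 ≤ Real.sqrt (∫ t, (t - m)^2 ∂ν) := by
    have hvar : s0^2 ≤ ∫ t, (t - m)^2 ∂ν := by
      have e : (fun t : ℝ => (|t - m| - s0)^2) =
          fun t => ((t-m)^2 - (2*s0)*|t - m|) + s0^2 := by
        funext t; rw [sub_sq, sq_abs]; ring
      have hsub : Integrable (fun t : ℝ => (t-m)^2 - (2*s0)*|t - m|) ν :=
        hsqm.sub (habs_m.const_mul _)
      have hexp : ∫ t, (|t - m| - s0)^2 ∂ν = (∫ t, (t - m)^2 ∂ν) - s0^2 := by
        rw [e, integral_add hsub (integrable_const _),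
          integral_sub hsqm (habs_m.const_mul _), integral_const_mul, integral_const]
        simp only [measure_univ, probReal_univ, ENNReal.toReal_one, smul_eq_mul, one_mul, ← hs0]
        ring
      have hpos : 0 ≤ ∫ t, (|t - m| - s0)^2 ∂ν := integral_nonneg fun t => sq_nonneg _
      linarith
    exact (Real.le_sqrt hs00 (integral_nonneg fun t => sq_nonneg _)).mpr hvar
  have hmean : ∫ t, |ε - t| ∂ν ≤ |ε - m| + s0 := by
    have heq : ∫ t, (|ε - m| + |t - m|) ∂ν = |ε - m| + s0 := by
      rw [integral_add (integrable_const _) habs_m, integral_const]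
      simp [hs0]
    rw [← heq]
    refine integral_mono hεabs ((integrable_const _).add habs_m) fun t => ?_
    calc |ε - t| ≤ |ε - m| + |m - t| := abs_sub_le ε m t
    _ = |ε - m| + |t - m| := by rw [abs_sub_comm m t]
  -- a.e. bound via fluctDist
  have haebound : ∀ᵐ ε' ∂ν, |φ ε - φ ε'| ≤ K * (C * |ε - ε'|) := by
    filter_upwards [hw] with ε' h
    calc |φ ε - φ ε'| ≤ (I.card : ℝ) ^ (1/p) * fluctDist p N (κ ε) (κ ε') :=
          dist_le_fluct hp (κ ε) (κ ε') (hperm ε) (hperm ε') (hmom ε) (hmom ε') I hN hI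
            f B hfB hfL
    _ ≤ (I.card : ℝ) ^ (1/p) * (C * |ε - ε'|) :=
          mul_le_mul_of_nonneg_left h (by positivity)
    _ ≤ K * (C * |ε - ε'|) := mul_le_mul_of_nonneg_right hKge (by positivity)
  have hDint : ∫ ε', (φ ε - φ ε') ∂ν = φ ε - ∫ ε', φ ε' ∂ν := by
    rw [integral_sub (integrable_const _) hφI, integral_const]
    simp
  have hfinal : |φ ε - ∫ ε', φ ε' ∂ν| ≤ K * (C * ∫ t, |ε - t| ∂ν) := by
    rw [← hDint, ← Real.norm_eq_abs]
    calc ‖∫ ε', (φ ε - φ ε') ∂ν‖ ≤ ∫ ε', ‖φ ε - φ ε'‖ ∂ν := norm_integral_le_integral_norm _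
    _ ≤ ∫ ε', K * (C * |ε - ε'|) ∂ν := by
        refine integral_mono_of_nonneg
          (Filter.Eventually.of_forall fun ε' => norm_nonneg _)
          (((hεabs.const_mul C).const_mul K).congr
            (Filter.Eventually.of_forall fun t => rfl)) ?_
        filter_upwards [haebound] with ε' h
        rw [Real.norm_eq_abs]; exact h
    _ = K * (C * ∫ t, |ε - t| ∂ν) := by rw [integral_const_mul, integral_const_mul]
  rw [hbind]
  calc |φ ε - ∫ ε', φ ε' ∂ν| ≤ K * (C * ∫ t, |ε - t| ∂ν) := hfinal
  _ ≤ K * (C * (|ε - m| + s0)) := by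
      refine mul_le_mul_of_nonneg_left ?_ hK0
      exact mul_le_mul_of_nonneg_left hmean hC.le
  _ ≤ K * (C * (|ε - m| + Real.sqrt (∫ t, (t - m)^2 ∂ν))) := by
      refine mul_le_mul_of_nonneg_left ?_ hK0
      refine mul_le_mul_of_nonneg_left ?_ hC.le
      linarith [hCS]
  _ = C * K * (Real.sqrt (∫ t, (t - m)^2 ∂ν) + |ε - m|) := by ring
end

section
/- Define F(m,μ) := ln 2 + ln cosh μ + μm + ((1+m)/2) ln((1+m)/2) + ((1−m)/2) ln((1−m)/2) for m ∈ (−1,1) and μ ∈ ℝ. Then: (i) for every m ∈ (−1,1), μ ∈ ℝ and η > 0 there exists N(m,η) ∈ ℕ such that for every N ≥ N(m,η) for which m lies in the range of m_N and m ∉ {−1,1}, one has (1/2 − η)·ln(N+1)/N ≤ H(μ_MC^{m;N} ‖ μ_C^{μ;N})/N − F(m,μ) ≤ ln(N+1)/N; (ii) for m ∈ (−1,1) and μ ∈ ℝ, F(m,μ) = 0 if and only if m = −tanh μ. -/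
set_option maxHeartbeats 1000000


/-- The magnetization `M[φ] = ∑_x φ(x)` of a spin configuration `φ ∈ {−1,1}^N`,
encoded as `φ : Fin N → Bool` with `true ↦ 1`, `false ↦ −1`. -/
noncomputable def mag {N : ℕ} (φ : Fin N → Bool) : ℝ :=
  ∑ x, if φ x then (1 : ℝ) else -1

-- The set `S_m` of configurations with magnetization density `m`.
open Classical in
noncomputable def magSet (N : ℕ) (m : ℝ) : Finset (Fin N → Bool) :=
  Finset.univ.filter fun φ => mag φ / N = m

/-- The auxiliary canonical partition function `Z_C(μ;N) = ∑_φ e^{−μ M[φ]}`. -/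
noncomputable def Zcan (N : ℕ) (μ : ℝ) : ℝ :=
  ∑ φ : Fin N → Bool, Real.exp (-μ * mag φ)

/-- The relative entropy `H(μ_MC^{m;N} ‖ μ_C^{μ;N})` of the auxiliary microcanonical ensemble
(uniform measure on `S_m`) with respect to the auxiliary canonical ensemble (probability
proportional to `e^{−μ M[φ]}`), written out as the explicit finite sum over the support `S_m`. -/
noncomputable def relEnt (N : ℕ) (m μ : ℝ) : ℝ :=
  ∑ φ ∈ magSet N m, ((magSet N m).card : ℝ)⁻¹ *
    Real.log (((magSet N m).card : ℝ)⁻¹ / (Real.exp (-μ * mag φ) / Zcan N μ))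

/-- The function `F(m,μ)` of the paper. -/
noncomputable def Fpara (m μ : ℝ) : ℝ :=
  Real.log 2 + Real.log (Real.cosh μ) + μ * m +
    (1 + m) / 2 * Real.log ((1 + m) / 2) + (1 - m) / 2 * Real.log ((1 - m) / 2)

noncomputable def nTrue {N : ℕ} (φ : Fin N → Bool) : ℕ :=
  (Finset.univ.filter fun x => φ x = true).card

lemma mag_eq {N : ℕ} (φ : Fin N → Bool) : mag φ = 2 * nTrue φ - N := by
  classical
  have : mag φ = ∑ x : Fin N, ((if φ x then (2:ℝ) else 0) - 1) := by
    unfold mag; congr 1; ext x; by_cases h : φ x <;> simp [h] <;> norm_num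
  rw [this, Finset.sum_sub_distrib]
  simp [nTrue, Finset.sum_ite, mul_comm]

lemma Zcan_eq (N : ℕ) (μ : ℝ) : Zcan N μ = (2 * Real.cosh μ) ^ N := by
  have h : ∀ φ : Fin N → Bool, Real.exp (-μ * mag φ)
      = ∏ i, (fun b : Bool => Real.exp (-μ * if b then (1:ℝ) else -1)) (φ i) := by
    intro φ
    rw [mag, Finset.mul_sum, Real.exp_sum]
  simp_rw [Zcan, h]
  rw [← Fintype.sum_pow (fun b : Bool => Real.exp (-μ * if b then (1:ℝ) else -1)) N]
  simp [Real.cosh_eq]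
  ring

lemma nTrue_le {N : ℕ} (φ : Fin N → Bool) : nTrue φ ≤ N := by
  classical
  simpa [nTrue] using Finset.card_filter_le Finset.univ (fun x => φ x = true)

lemma magSet_card {N : ℕ} (hN : 1 ≤ N) (m : ℝ) (φ₀ : Fin N → Bool)
    (h₀ : mag φ₀ / N = m) : (magSet N m).card = N.choose (nTrue φ₀) := by
  classical
  have hNne : (N : ℝ) ≠ 0 := by positivity
  have hmem : ∀ φ : Fin N → Bool, (mag φ / N = m ↔ nTrue φ = nTrue φ₀) := by
    intro φ
    constructor
    · intro h
      have : mag φ = mag φ₀ := by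
        field_simp at h h₀
        rw [h, ← h₀]
      rw [mag_eq, mag_eq] at this
      have h2 : (nTrue φ : ℝ) = nTrue φ₀ := by linarith
      exact_mod_cast h2
    · intro h
      rw [← h₀]
      congr 1
      rw [mag_eq, mag_eq, h]
  have : magSet N m = Finset.univ.filter fun φ => nTrue φ = nTrue φ₀ := by
    apply Finset.filter_congr
    intro φ _
    simp [hmem φ]
  rw [this, show N.choose (nTrue φ₀) = (Finset.univ : Finset (Fin N)).card.choose (nTrue φ₀) by simp]
  rw [← Finset.card_powersetCard (nTrue φ₀) (Finset.univ : Finset (Fin N))]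
  apply Finset.card_nbij' (i := fun φ => Finset.univ.filter fun x => φ x = true)
    (j := fun s x => decide (x ∈ s))
  · intro φ hφ
    simp only [Finset.mem_coe, Finset.mem_filter, Finset.mem_univ, true_and] at hφ
    simpa [Finset.mem_powersetCard, nTrue] using hφ
  · intro s hs
    simp only [Finset.mem_coe, Finset.mem_powersetCard] at hs
    simp only [Finset.coe_filter, Finset.coe_univ, Set.sep_univ, Set.mem_setOf_eq, Finset.mem_coe, Finset.mem_filter, Finset.mem_univ, true_and, nTrue]
    refine Finset.mem_filter.mpr ⟨Finset.mem_univ _, ?_⟩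
    trans s.card
    · congr 1; ext x; simp
    · simpa [nTrue] using hs.2
  · intro φ hφ
    ext x
    simp
  · intro s hs
    ext x
    simp

lemma relEnt_eq {N : ℕ} (hN : 1 ≤ N) (m μ : ℝ) (φ₀ : Fin N → Bool)
    (h₀ : mag φ₀ / N = m) :
    relEnt N m μ = N * Real.log (2 * Real.cosh μ) + μ * (N * m)
      - Real.log (N.choose (nTrue φ₀)) := by
  classical
  have hNne : (N : ℝ) ≠ 0 := by positivity
  have hcard := magSet_card hN m φ₀ h₀
  have hcpos : 0 < N.choose (nTrue φ₀) := Nat.choose_pos (nTrue_le φ₀)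
  have hZ : Zcan N μ = (2 * Real.cosh μ) ^ N := Zcan_eq N μ
  have hcosh : 0 < 2 * Real.cosh μ := by positivity
  have hZpos : 0 < Zcan N μ := by rw [hZ]; positivity
  have hmagφ : ∀ φ ∈ magSet N m, mag φ = N * m := by
    intro φ hφ
    simp only [magSet, Finset.mem_filter] at hφ
    have h2 := hφ.2
    rw [div_eq_iff hNne] at h2
    linarith
  have hsum : relEnt N m μ = (magSet N m).card *
      (((magSet N m).card : ℝ)⁻¹ *
        Real.log (((magSet N m).card : ℝ)⁻¹ / (Real.exp (-μ * (N * m)) / Zcan N μ))) := by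
    rw [relEnt, Finset.sum_congr rfl (fun φ hφ => by rw [hmagφ φ hφ]), Finset.sum_const,
      nsmul_eq_mul]
  rw [hsum, hcard]
  have hcpos' : (0:ℝ) < (N.choose (nTrue φ₀) : ℝ) := by exact_mod_cast hcpos
  rw [mul_inv_cancel_left₀ (ne_of_gt hcpos')]
  rw [Real.log_div (by positivity) (by positivity), Real.log_inv,
    Real.log_div (Real.exp_ne_zero _) (ne_of_gt hZpos), Real.log_exp, hZ, Real.log_pow]
  ring

open Stirling in
lemma stirling_lb (n : ℕ) (hn : 1 ≤ n) : Real.sqrt Real.pi ≤ stirlingSeq n := by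
  obtain ⟨k, rfl⟩ := Nat.exists_eq_add_of_le hn
  have ht : Filter.Tendsto (fun k => stirlingSeq (k + 1)) Filter.atTop (nhds (Real.sqrt Real.pi)) := by
    have := tendsto_stirlingSeq_sqrt_pi.comp (Filter.tendsto_add_atTop_nat 1)
    exact this
  have := (stirlingSeq'_antitone).le_of_tendsto ht k
  simpa [Nat.add_comm] using this

open Stirling in
lemma stirling_ub (n : ℕ) (hn : 1 ≤ n) : stirlingSeq n ≤ Real.exp 1 / Real.sqrt 2 := by
  obtain ⟨k, rfl⟩ := Nat.exists_eq_add_of_le hn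
  have := stirlingSeq'_antitone (Nat.zero_le k)
  simp only [Function.comp] at this
  rw [← stirlingSeq_one]
  simpa [Nat.add_comm] using this

open Stirling in
lemma log_factorial_eq (n : ℕ) (hn : 1 ≤ n) :
    Real.log ((Nat.factorial n)) = Real.log (stirlingSeq n) + Real.log (2 * n) / 2
      + n * Real.log n - n := by
  have hnpos : (0:ℝ) < n := by exact_mod_cast hn
  have hd : (0:ℝ) < Real.sqrt (2 * n) * ((n : ℝ) / Real.exp 1) ^ n := by positivity
  have hfac : ((Nat.factorial n) : ℝ) = stirlingSeq n * (Real.sqrt (2 * n) * ((n : ℝ) / Real.exp 1) ^ n) := by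
    rw [stirlingSeq, div_mul_cancel₀]
    exact ne_of_gt hd
  have hspos : 0 < stirlingSeq n := by
    rw [stirlingSeq]; positivity
  rw [hfac, Real.log_mul (ne_of_gt hspos) (ne_of_gt hd),
    Real.log_mul (by positivity) (by positivity), Real.log_sqrt (by positivity),
    Real.log_pow, Real.log_div (ne_of_gt hnpos) (Real.exp_ne_zero 1), Real.log_exp]
  ring

lemma log_factorial_ge (n : ℕ) (hn : 1 ≤ n) :
    Real.log Real.pi / 2 + Real.log (2 * n) / 2 + n * Real.log n - n ≤ Real.log ((Nat.factorial n)) := by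
  rw [log_factorial_eq n hn]
  have h1 : Real.log Real.pi / 2 ≤ Real.log (Stirling.stirlingSeq n) := by
    rw [← Real.log_sqrt Real.pi_pos.le]
    exact Real.log_le_log (Real.sqrt_pos.mpr Real.pi_pos) (stirling_lb n hn)
  linarith

lemma log_factorial_le (n : ℕ) (hn : 1 ≤ n) :
    Real.log ((Nat.factorial n)) ≤ (1 - Real.log 2 / 2) + Real.log (2 * n) / 2 + n * Real.log n - n := by
  rw [log_factorial_eq n hn]
  have hspos : 0 < Stirling.stirlingSeq n := by
    rw [Stirling.stirlingSeq]
    have : (0:ℝ) < n := by exact_mod_cast hn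
    positivity
  have h1 : Real.log (Stirling.stirlingSeq n) ≤ 1 - Real.log 2 / 2 := by
    have := Real.log_le_log hspos (stirling_ub n hn)
    rwa [Real.log_div (Real.exp_ne_zero 1) (by positivity), Real.log_exp,
      Real.log_sqrt (by norm_num)] at this
  linarith

lemma log_choose_split (a b : ℕ) (ha : 1 ≤ a) (hb : 1 ≤ b) :
    Real.log ((a+b).choose a) = Real.log (Nat.factorial (a+b))
      - Real.log (Nat.factorial a) - Real.log (Nat.factorial b) := by
  have h := Nat.choose_mul_factorial_mul_factorial (Nat.le_add_right a b)
  have h' : ((a+b).choose a) * Nat.factorial a * Nat.factorial b = Nat.factorial (a+b) := by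
    simpa using h
  rw [← h']
  have hc : 0 < (a+b).choose a := Nat.choose_pos (Nat.le_add_right a b)
  push_cast
  rw [Real.log_mul (by positivity) (by positivity), Real.log_mul (by positivity) (by positivity)]
  ring

lemma log_choose_le (a b : ℕ) (ha : 1 ≤ a) (hb : 1 ≤ b) :
    Real.log ((a+b).choose a) ≤ ((a:ℝ)+b) * Real.log ((a:ℝ)+b) - a * Real.log a - b * Real.log b
      + (1 - Real.log 2 / 2 - Real.log Real.pi)
      + (Real.log (2*((a:ℝ)+b))/2 - Real.log (2*(a:ℝ))/2 - Real.log (2*(b:ℝ))/2) := by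
  have h1 := log_factorial_le (a+b) (le_trans ha (Nat.le_add_right a b))
  have h2 := log_factorial_ge a ha
  have h3 := log_factorial_ge b hb
  rw [log_choose_split a b ha hb]
  push_cast at h1 h2 h3 ⊢
  linarith

lemma log_choose_ge (a b : ℕ) (ha : 1 ≤ a) (hb : 1 ≤ b) :
    ((a:ℝ)+b) * Real.log ((a:ℝ)+b) - a * Real.log a - b * Real.log b
      + (Real.log Real.pi / 2 - 2 + Real.log 2)
      + (Real.log (2*((a:ℝ)+b))/2 - Real.log (2*(a:ℝ))/2 - Real.log (2*(b:ℝ))/2)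
      ≤ Real.log ((a+b).choose a) := by
  have h1 := log_factorial_ge (a+b) (le_trans ha (Nat.le_add_right a b))
  have h2 := log_factorial_le a ha
  have h3 := log_factorial_le b hb
  rw [log_choose_split a b ha hb]
  push_cast at h1 h2 h3 ⊢
  linarith

lemma part2 (m : ℝ) (hm : m ∈ Set.Ioo (-1:ℝ) 1) (μ : ℝ) :
    Fpara m μ = 0 ↔ m = -Real.tanh μ := by
  obtain ⟨hm1, hm2⟩ := hm
  have hp : (0:ℝ) < (1+m)/2 := by linarith
  have hq : (0:ℝ) < (1-m)/2 := by linarith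
  have hcosh : (0:ℝ) < Real.cosh μ := Real.cosh_pos μ
  have hps : (0:ℝ) < Real.exp (-μ) / (2*Real.cosh μ) := by positivity
  have hqs : (0:ℝ) < Real.exp μ / (2*Real.cosh μ) := by positivity
  set ps := Real.exp (-μ) / (2*Real.cosh μ) with hpsdef
  set qs := Real.exp μ / (2*Real.cosh μ) with hqsdef
  have hsum : ps + qs = 1 := by
    rw [hpsdef, hqsdef, Real.cosh_eq]
    field_simp
    ring
  have hlogps : Real.log ps = -μ - (Real.log 2 + Real.log (Real.cosh μ)) := by
    rw [hpsdef, Real.log_div (Real.exp_ne_zero _) (by positivity), Real.log_exp,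
      Real.log_mul two_ne_zero (ne_of_gt hcosh)]
  have hlogqs : Real.log qs = μ - (Real.log 2 + Real.log (Real.cosh μ)) := by
    rw [hqsdef, Real.log_div (Real.exp_ne_zero _) (by positivity), Real.log_exp,
      Real.log_mul two_ne_zero (ne_of_gt hcosh)]
  have htanh : -Real.tanh μ = ps - qs := by
    rw [hpsdef, hqsdef, Real.tanh_eq_sinh_div_cosh, Real.sinh_eq, Real.cosh_eq]
    have : Real.exp μ + Real.exp (-μ) > 0 := by positivity
    field_simp
    ring
  have hkey : Fpara m μ = (1+m)/2 * (Real.log ((1+m)/2) - Real.log ps)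
      + (1-m)/2 * (Real.log ((1-m)/2) - Real.log qs) := by
    rw [hlogps, hlogqs, Fpara]
    ring
  constructor
  · intro hF
    by_contra hne
    have hppne : (1+m)/2 ≠ ps := by
      intro h
      apply hne
      rw [htanh]
      have : qs = 1 - ps := by linarith
      rw [this, ← h]
      ring
    have h1 : (1+m)/2 * (Real.log ((1+m)/2) - Real.log ps) > (1+m)/2 - ps := by
      have hx : (0:ℝ) < ps / ((1+m)/2) := by positivity
      have hxne : ps / ((1+m)/2) ≠ 1 := by
        rw [Ne, div_eq_one_iff_eq (ne_of_gt hp)]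
        exact fun h => hppne h.symm
      have hlog := Real.log_lt_sub_one_of_pos hx hxne
      rw [Real.log_div (ne_of_gt hps) (ne_of_gt hp)] at hlog
      have e : (1+m)/2 * (ps/((1+m)/2) - 1) = ps - (1+m)/2 := by
        have hne1 : (1+m) ≠ 0 := ne_of_gt (by linarith)
        field_simp
      nlinarith [hlog, hp, e]
    have h2 : (1-m)/2 * (Real.log ((1-m)/2) - Real.log qs) ≥ (1-m)/2 - qs := by
      have hx : (0:ℝ) < qs / ((1-m)/2) := by positivity
      have hlog := Real.log_le_sub_one_of_pos hx
      rw [Real.log_div (ne_of_gt hqs) (ne_of_gt hq)] at hlog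
      have e : (1-m)/2 * (qs/((1-m)/2) - 1) = qs - (1-m)/2 := by
        have hne1 : (1-m) ≠ 0 := ne_of_gt (by linarith)
        field_simp
      nlinarith [hlog, hq, e]
    have : Fpara m μ > 0 := by
      rw [hkey]
      have : (1+m)/2 + (1-m)/2 = 1 := by ring
      linarith
    linarith
  · intro h
    have hpps : (1+m)/2 = ps := by
      rw [htanh] at h
      have : qs = 1 - ps := by linarith
      rw [this] at h
      linarith
    have hqqs : (1-m)/2 = qs := by
      have : qs = 1 - ps := by linarith
      rw [this, ← hpps]
      ring
    rw [hkey, hpps, hqqs]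
    ring

lemma part1 (m : ℝ) (hm : m ∈ Set.Ioo (-1:ℝ) 1) (μ : ℝ) (η : ℝ) (hη : 0 < η) :
    ∃ N₀ : ℕ, ∀ N : ℕ, N₀ ≤ N → (∃ φ : Fin N → Bool, mag φ / N = m) →
      (1/2 - η) * Real.log (N+1) / N ≤ relEnt N m μ / N - Fpara m μ ∧
      relEnt N m μ / N - Fpara m μ ≤ Real.log (N+1) / N := by
  obtain ⟨hm1, hm2⟩ := hm
  have h1m : (0:ℝ) < 1 + m := by linarith
  have h2m : (0:ℝ) < 1 - m := by linarith
  set η' := min η (1/2) with hη'def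
  have hη'pos : 0 < η' := lt_min hη (by norm_num)
  have hη'le : η' ≤ 1/2 := min_le_right _ _
  have hη'η : η' ≤ η := min_le_left _ _
  set G := Real.log ((1+m)*(1-m)) with hGdef
  set E := (Real.log 2 / 2 + 1 - Real.log Real.pi - G/2) / η' with hE
  refine ⟨⌈Real.exp E⌉₊, ?_⟩
  rintro N hNge ⟨φ₀, h₀⟩
  have hceil1 : 1 ≤ ⌈Real.exp E⌉₊ := Nat.one_le_iff_ne_zero.mpr (by
    intro h
    have := Nat.ceil_eq_zero.mp h
    have := Real.exp_pos E
    linarith)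
  have hN1 : 1 ≤ N := le_trans hceil1 hNge
  have hnpos : (0:ℝ) < N := by exact_mod_cast hN1
  have hn1 : (1:ℝ) ≤ N := by exact_mod_cast hN1
  have hNne : (N:ℝ) ≠ 0 := ne_of_gt hnpos
  have hlogN_ge : E ≤ Real.log N := by
    have h1 : Real.exp E ≤ (⌈Real.exp E⌉₊ : ℝ) := Nat.le_ceil _
    have h2 : ((⌈Real.exp E⌉₊ : ℕ):ℝ) ≤ N := by exact_mod_cast hNge
    calc E = Real.log (Real.exp E) := (Real.log_exp E).symm
    _ ≤ Real.log N := Real.log_le_log (Real.exp_pos E) (by linarith)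
  set a := nTrue φ₀ with hadef
  have hmagφ := mag_eq φ₀
  have hA : (a:ℝ) = N*(1+m)/2 := by
    rw [div_eq_iff hNne] at h₀
    rw [hmagφ] at h₀
    linarith
  have haN : a ≤ N := nTrue_le φ₀
  set b := N - a with hbdef
  have hab : a + b = N := by omega
  have hB : (b:ℝ) = N*(1-m)/2 := by
    have hcast : (b:ℝ) = (N:ℝ) - a := by
      rw [hbdef]
      push_cast [haN]
      ring
    rw [hcast, hA]
    ring
  have ha1 : 1 ≤ a := by
    have : (0:ℝ) < a := by rw [hA]; positivity
    exact_mod_cast Nat.one_le_iff_ne_zero.mpr (by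
      intro h; rw [h] at this; simp at this)
  have hb1 : 1 ≤ b := by
    have : (0:ℝ) < b := by rw [hB]; positivity
    exact_mod_cast Nat.one_le_iff_ne_zero.mpr (by
      intro h; rw [h] at this; simp at this)
  have hapos : (0:ℝ) < a := by exact_mod_cast ha1
  have hbpos : (0:ℝ) < b := by exact_mod_cast hb1
  have hABn : (a:ℝ) + (b:ℝ) = (N:ℝ) := by exact_mod_cast hab
  have hRE := relEnt_eq hN1 m μ φ₀ h₀
  have hchoose_le := log_choose_le a b ha1 hb1
  have hchoose_ge := log_choose_ge a b ha1 hb1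
  rw [hab, hABn] at hchoose_le hchoose_ge
  -- rewrite the √(2·) style log terms
  have hR2a : Real.log (2*(a:ℝ)) = Real.log N + Real.log (1+m) := by
    rw [show 2*(a:ℝ) = N*(1+m) by rw [hA]; ring,
      Real.log_mul hNne (ne_of_gt h1m)]
  have hR2b : Real.log (2*(b:ℝ)) = Real.log N + Real.log (1-m) := by
    rw [show 2*(b:ℝ) = N*(1-m) by rw [hB]; ring,
      Real.log_mul hNne (ne_of_gt h2m)]
  have hR2N : Real.log (2*(N:ℝ)) = Real.log 2 + Real.log N :=
    Real.log_mul two_ne_zero hNne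
  rw [hR2a, hR2b, hR2N] at hchoose_le hchoose_ge
  have hGsplit : G = Real.log (1+m) + Real.log (1-m) := by
    rw [hGdef, Real.log_mul (ne_of_gt h1m) (ne_of_gt h2m)]
  have hGle : G ≤ 0 := by
    rw [hGdef]
    exact Real.log_nonpos (mul_nonneg h1m.le h2m.le) (by nlinarith [sq_nonneg m])
  -- the difference formula
  have hp2 : (1+m)/2 = (a:ℝ)/N := by rw [hA]; field_simp
  have hq2 : (1-m)/2 = (b:ℝ)/N := by rw [hB]; field_simp
  have hcosh : (0:ℝ) < Real.cosh μ := Real.cosh_pos μ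
  have hdiff : relEnt N m μ / N - Fpara m μ
      = ((N:ℝ)*Real.log N - a*Real.log a - b*Real.log b - Real.log (N.choose a)) / N := by
    rw [hRE, Fpara, Real.log_mul two_ne_zero (ne_of_gt hcosh), hp2, hq2,
      Real.log_div (ne_of_gt hapos) hNne, Real.log_div (ne_of_gt hbpos) hNne, ← hABn]
    have habne : (a:ℝ) + b ≠ 0 := by positivity
    field_simp
    ring
  -- numeric facts
  have hlog2 : (0.6931471803:ℝ) < Real.log 2 := Real.log_two_gt_d9
  have hlogpi : (1:ℝ) ≤ Real.log Real.pi := by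
    have h1 : Real.exp 1 < Real.pi := by
      have := Real.exp_one_lt_d9
      have := Real.pi_gt_three
      linarith
    calc (1:ℝ) = Real.log (Real.exp 1) := (Real.log_exp 1).symm
    _ ≤ Real.log Real.pi := Real.log_le_log (Real.exp_pos 1) h1.le
  have hsqrtlog : Real.log 2 + Real.log N / 2 ≤ Real.log (N+1) := by
    have hs := Real.sq_sqrt hnpos.le
    have hs2 := Real.sqrt_nonneg (N:ℝ)
    have hsq : 2*Real.sqrt N ≤ (N:ℝ) + 1 := by nlinarith [sq_nonneg (Real.sqrt N - 1)]
    have hsp : (0:ℝ) < Real.sqrt N := Real.sqrt_pos.mpr hnpos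
    have h1 := Real.log_le_log (by positivity) hsq
    rwa [Real.log_mul two_ne_zero (ne_of_gt hsp), Real.log_sqrt hnpos.le] at h1
  have hlogNnn : 0 ≤ Real.log N := Real.log_nonneg hn1
  rw [hdiff]
  constructor
  · -- lower bound
    have hlogN1nn : 0 ≤ Real.log ((N:ℝ)+1) := Real.log_nonneg (by linarith)
    have hs1 : (1/2 - η) * Real.log ((N:ℝ)+1) ≤ (1/2 - η') * Real.log ((N:ℝ)+1) :=
      mul_le_mul_of_nonneg_right (by linarith) hlogN1nn
    have hlogN1le : Real.log ((N:ℝ)+1) ≤ Real.log 2 + Real.log N := by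
      rw [← Real.log_mul two_ne_zero hNne]
      exact Real.log_le_log (by linarith) (by linarith)
    have hs2 : (1/2 - η') * Real.log ((N:ℝ)+1) ≤ (1/2 - η') * (Real.log 2 + Real.log N) :=
      mul_le_mul_of_nonneg_left hlogN1le (by linarith)
    have hη'l2 : 0 ≤ η' * Real.log 2 := mul_nonneg hη'pos.le (by linarith)
    have hEmul : η' * E = Real.log 2 / 2 + 1 - Real.log Real.pi - G/2 := by
      rw [hE]
      field_simp
    have hs3 : η' * E ≤ η' * Real.log N := mul_le_mul_of_nonneg_left hlogN_ge hη'pos.le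
    have hkey : (1/2 - η) * Real.log ((N:ℝ)+1)
        ≤ (N:ℝ)*Real.log N - a*Real.log a - b*Real.log b - Real.log (N.choose a) := by
      linarith [hchoose_le, hGsplit]
    calc (1/2 - η) * Real.log ((N:ℝ)+1) / N
        ≤ ((N:ℝ)*Real.log N - a*Real.log a - b*Real.log b - Real.log (N.choose a)) / N := by
          apply div_le_div_of_nonneg_right hkey hnpos.le
    _ = _ := rfl
  · -- upper bound
    have hkey : (N:ℝ)*Real.log N - a*Real.log a - b*Real.log b - Real.log (N.choose a)
        ≤ Real.log ((N:ℝ)+1) := by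
      linarith [hchoose_ge, hGsplit]
    apply div_le_div_of_nonneg_right hkey hnpos.le |>.trans_eq rfl

theorem stmt4 :
    -- (i) two-sided bound for the specific relative entropy
    (∀ m ∈ Set.Ioo (-1 : ℝ) 1, ∀ μ : ℝ, ∀ η : ℝ, 0 < η →
      ∃ N₀ : ℕ, ∀ N : ℕ, N₀ ≤ N →
        (∃ φ : Fin N → Bool, mag φ / N = m) →
          (1 / 2 - η) * Real.log (N + 1) / N ≤ relEnt N m μ / N - Fpara m μ ∧
          relEnt N m μ / N - Fpara m μ ≤ Real.log (N + 1) / N) ∧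
    -- (ii) `F(m,μ) = 0` iff `m = −tanh μ`
    (∀ m ∈ Set.Ioo (-1 : ℝ) 1, ∀ μ : ℝ, (Fpara m μ = 0 ↔ m = -Real.tanh μ)) := by
  constructor
  · intro m hm μ η hη
    exact part1 m hm μ η hη
  · intro m hm μ
    exact part2 m hm μ
end
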